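/- arXiv:1608.06931 — 6 statements merged into one kernel-verified Lean document; each statement's English description precedes it below -/
import Mathlib

section
/- Let n > k ≥ 1 and let σ be a permutation of size n. If σ is k-prolific, then σ is also j-prolific for every j with 1 ≤ j < k. -/
open Finset

namespace Prolific

/-- The L¹ ("taxicab") distance between the `i`th and `j`th entries of `σ`. -/
def dperm {n : ℕ} (σ : Equiv.Perm (Fin n)) (i j : Fin n) : ℕ :=
  Nat.dist (i : ℕ) (j : ℕ) + Nat.dist (σ i : ℕ) (σ j : ℕ)

/-- The breadth of a permutation: the minimum distance between two distinct entries. -/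
noncomputable def breadth {n : ℕ} (σ : Equiv.Perm (Fin n)) : ℕ :=
  sInf {d : ℕ | ∃ i j : Fin n, i ≠ j ∧ d = dperm σ i j}

/-- The pattern `σ_⟨A⟩` of `σ` obtained by deleting the entries in positions `A`. -/
noncomputable def pattern {n m : ℕ} (σ : Equiv.Perm (Fin n)) (A : Finset (Fin n))
    (h : Aᶜ.card = m) : Equiv.Perm (Fin m) :=
  (Aᶜ.orderIsoOfFin h).toEquiv.trans
    (((Equiv.subtypeEquiv (σ : Equiv.Perm (Fin n)) (fun a => by
        constructor
        · exact fun ha => Finset.mem_image_of_mem σ ha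
        · intro ha
          rcases Finset.mem_image.mp ha with ⟨x, hx, hxa⟩
          rwa [← σ.injective hxa])).trans
      ((Aᶜ.image σ).orderIsoOfFin
        (by rw [Finset.card_image_of_injective _ σ.injective, h])).toEquiv.symm))

/-- `σ_⟨A⟩ = σ_⟨B⟩` (in particular the two patterns have the same size). -/
def PatternEq {n : ℕ} (σ : Equiv.Perm (Fin n)) (A B : Finset (Fin n)) : Prop :=
  ∃ (m : ℕ) (hA : Aᶜ.card = m) (hB : Bᶜ.card = m), pattern σ A hA = pattern σ B hB

/-- `σ` is `k`-prolific: distinct `k`-element sets of positions produce distinct patterns. -/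
def IsProlific {n : ℕ} (k : ℕ) (σ : Equiv.Perm (Fin n)) : Prop :=
  ∀ A B : Finset (Fin n), A.card = k → B.card = k → A ≠ B → ¬ PatternEq σ A B


theorem pattern_le {n m : ℕ} (σ : Equiv.Perm (Fin n)) (A : Finset (Fin n))
    (h : Aᶜ.card = m) (s t : Fin m) :
    pattern σ A h s ≤ pattern σ A h t ↔
      σ (Aᶜ.orderIsoOfFin h s) ≤ σ (Aᶜ.orderIsoOfFin h t) := by
  set g := (Aᶜ.image σ).orderIsoOfFin
        (by rw [Finset.card_image_of_injective _ σ.injective, h]) with hg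
  have key : ∀ u : Fin m, g (pattern σ A h u) = ⟨σ (Aᶜ.orderIsoOfFin h u), by
      exact Finset.mem_image_of_mem σ (Aᶜ.orderIsoOfFin h u).2⟩ := by
    intro u
    simp [pattern, hg, Equiv.subtypeEquiv]
  rw [← g.le_iff_le, key, key, Subtype.mk_le_mk]

theorem strictmono_id {m : ℕ} (f : Fin m → Fin m)
    (hm : ∀ s t : Fin m, s ≤ t ↔ f s ≤ f t) : f = id := by
  have hmono : StrictMono f := fun s t hst => by
    rcases lt_or_ge (f s) (f t) with h | h
    · exact h
    · exact absurd ((hm t s).mpr h) (not_le.mpr hst)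
  have h1 : (Finset.univ : Finset (Fin m)).card = m := by simp
  have e1 := Finset.orderEmbOfFin_unique h1 (fun x => Finset.mem_univ (f x)) hmono
  have e2 := Finset.orderEmbOfFin_unique h1 (fun x : Fin m => Finset.mem_univ x)
    (strictMono_id : StrictMono (id : Fin m → Fin m))
  rw [e1, ← e2]; rfl

theorem eq_pattern {n m : ℕ} (σ : Equiv.Perm (Fin n)) (A : Finset (Fin n))
    (h : Aᶜ.card = m) (π : Equiv.Perm (Fin m))
    (hπ : ∀ s t : Fin m, π s ≤ π t ↔ σ (Aᶜ.orderIsoOfFin h s) ≤ σ (Aᶜ.orderIsoOfFin h t)) :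
    π = pattern σ A h := by
  have key : ∀ s t : Fin m, π s ≤ π t ↔ pattern σ A h s ≤ pattern σ A h t := by
    intro s t; rw [hπ, pattern_le]
  have h2 : ∀ s t : Fin m, s ≤ t ↔
      (pattern σ A h) (π.symm s) ≤ (pattern σ A h) (π.symm t) := by
    intro s t
    rw [← key, Equiv.apply_symm_apply, Equiv.apply_symm_apply]
  have := strictmono_id (fun u => (pattern σ A h) (π.symm u)) h2
  ext u
  have := congrFun this (π u)
  have h3 : π u = (pattern σ A h) u := by simpa using this.symm
  rw [h3]

/-- composition -/
theorem pattern_pattern {n m m' : ℕ} (σ : Equiv.Perm (Fin n)) (A : Finset (Fin n))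
    (hA : Aᶜ.card = m) (C : Finset (Fin m)) (hC : Cᶜ.card = m')
    (hA' : (A ∪ C.image (fun c => ((Aᶜ.orderIsoOfFin hA c : Fin n))))ᶜ.card = m') :
    pattern (pattern σ A hA) C hC
      = pattern σ (A ∪ C.image (fun c => ((Aᶜ.orderIsoOfFin hA c : Fin n)))) hA' := by
  set A' := A ∪ C.image (fun c => ((Aᶜ.orderIsoOfFin hA c : Fin n))) with hA'def
  set f : Fin m' → Fin n := fun i => ((Aᶜ.orderIsoOfFin hA (Cᶜ.orderIsoOfFin hC i) : Fin n))
    with hf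
  have hmem : ∀ i, f i ∈ A'ᶜ := by
    intro i
    rw [Finset.mem_compl, hA'def, Finset.mem_union]
    push_neg
    constructor
    · have := (Aᶜ.orderIsoOfFin hA (Cᶜ.orderIsoOfFin hC i)).2
      rw [Finset.mem_compl] at this
      exact this
    · intro hmem
      rcases Finset.mem_image.mp hmem with ⟨c, hc, hcf⟩
      have : (Aᶜ.orderIsoOfFin hA c) = (Aᶜ.orderIsoOfFin hA (Cᶜ.orderIsoOfFin hC i)) :=
        Subtype.ext hcf
      have hcd := (Aᶜ.orderIsoOfFin hA).injective this
      have : (Cᶜ.orderIsoOfFin hC i : Fin m) ∈ Cᶜ := (Cᶜ.orderIsoOfFin hC i).2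
      rw [← hcd] at this
      exact absurd hc (Finset.mem_compl.mp this)
  have hmono : StrictMono f := by
    intro s t hst
    exact Subtype.coe_lt_coe.mpr <| (Aᶜ.orderIsoOfFin hA).strictMono <|
      Subtype.coe_lt_coe.mpr <| (Cᶜ.orderIsoOfFin hC).strictMono hst
  have hfeq := Finset.orderEmbOfFin_unique hA' hmem hmono
  have hfval : ∀ i, (A'ᶜ.orderIsoOfFin hA' i : Fin n) = f i := by
    intro i
    rw [Finset.coe_orderIsoOfFin_apply, ← hfeq]
  symm
  apply (eq_pattern σ A' hA' _ _).symm
  intro s t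
  rw [pattern_le, pattern_le, hfval, hfval]

/-- If `σ` is `k`-prolific, then `σ` is `j`-prolific for every `1 ≤ j < k`. -/
theorem prolific_hereditary {n k : ℕ} (hk : 1 ≤ k) (hkn : k < n)
    (σ : Equiv.Perm (Fin n)) (h : IsProlific k σ) :
    ∀ j : ℕ, 1 ≤ j → j < k → IsProlific j σ := by
  intro j hj hjk A B hAj hBj hne hpe
  obtain ⟨m, hA, hB, heq⟩ := hpe
  have hmval : m = n - j := by
    have := Finset.card_compl A
    rw [hA, hAj, Fintype.card_fin] at this
    omega
  -- an element of A not in B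
  have hnotsub : ¬ A ⊆ B := fun hsub =>
    hne (Finset.eq_of_subset_of_card_le hsub (by rw [hAj, hBj]))
  obtain ⟨x, hxA, hxB⟩ := Finset.not_subset.mp hnotsub
  set c0 : Fin m := (Bᶜ.orderIsoOfFin hB).symm ⟨x, Finset.mem_compl.mpr hxB⟩ with hc0
  -- choose C avoiding c0
  have hcard_erase : k - j ≤ ((Finset.univ : Finset (Fin m)).erase c0).card := by
    rw [Finset.card_erase_of_mem (Finset.mem_univ c0), Finset.card_univ, Fintype.card_fin]
    omega
  obtain ⟨C, hCsub, hCcard⟩ := Finset.exists_subset_card_eq hcard_erase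
  have hC : Cᶜ.card = n - k := by
    have := Finset.card_compl C
    rw [hCcard, Fintype.card_fin] at this
    omega
  -- the extended sets
  have hinjA : Function.Injective (fun c => ((Aᶜ.orderIsoOfFin hA c : Fin n)) : Fin m → Fin n) :=
    fun a b hab => (Aᶜ.orderIsoOfFin hA).injective (Subtype.ext hab)
  have hinjB : Function.Injective (fun c => ((Bᶜ.orderIsoOfFin hB c : Fin n)) : Fin m → Fin n) :=
    fun a b hab => (Bᶜ.orderIsoOfFin hB).injective (Subtype.ext hab)
  set A' := A ∪ C.image (fun c => ((Aᶜ.orderIsoOfFin hA c : Fin n))) with hA'def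
  set B' := B ∪ C.image (fun c => ((Bᶜ.orderIsoOfFin hB c : Fin n))) with hB'def
  have hdisjA : Disjoint A (C.image (fun c => ((Aᶜ.orderIsoOfFin hA c : Fin n)))) := by
    rw [Finset.disjoint_left]
    intro a haA haI
    rcases Finset.mem_image.mp haI with ⟨c, _, hcf⟩
    have := (Aᶜ.orderIsoOfFin hA c).2
    rw [hcf, Finset.mem_compl] at this
    exact this haA
  have hdisjB : Disjoint B (C.image (fun c => ((Bᶜ.orderIsoOfFin hB c : Fin n)))) := by
    rw [Finset.disjoint_left]
    intro a haA haI
    rcases Finset.mem_image.mp haI with ⟨c, _, hcf⟩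
    have := (Bᶜ.orderIsoOfFin hB c).2
    rw [hcf, Finset.mem_compl] at this
    exact this haA
  have hA'card : A'.card = k := by
    rw [hA'def, Finset.card_union_of_disjoint hdisjA,
      Finset.card_image_of_injective _ hinjA, hAj, hCcard]
    omega
  have hB'card : B'.card = k := by
    rw [hB'def, Finset.card_union_of_disjoint hdisjB,
      Finset.card_image_of_injective _ hinjB, hBj, hCcard]
    omega
  have hA' : A'ᶜ.card = n - k := by
    rw [Finset.card_compl, hA'card, Fintype.card_fin]
  have hB' : B'ᶜ.card = n - k := by
    rw [Finset.card_compl, hB'card, Fintype.card_fin]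
  -- A' ≠ B'
  have hne' : A' ≠ B' := by
    intro heq'
    have hxA' : x ∈ A' := Finset.mem_union_left _ hxA
    rw [heq', hB'def, Finset.mem_union] at hxA'
    rcases hxA' with h1 | h1
    · exact hxB h1
    · rcases Finset.mem_image.mp h1 with ⟨c, hcC, hcf⟩
      have : (Bᶜ.orderIsoOfFin hB c) = ⟨x, Finset.mem_compl.mpr hxB⟩ := Subtype.ext hcf
      have hcc0 : c = c0 := by
        rw [hc0, ← this, OrderIso.symm_apply_apply]
      have := hCsub hcC
      rw [hcc0] at this
      exact (Finset.mem_erase.mp this).1 rfl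
  -- pattern equality
  refine h A' B' hA'card hB'card hne' ⟨n - k, hA', hB', ?_⟩
  rw [← pattern_pattern σ A hA C hC hA', ← pattern_pattern σ B hB C hC hB', heq]

end Prolific
end

section
/- Deleting a single entry from a permutation decreases the breadth by at most one: if σ is a permutation of size n ≥ 3 and p ∈ {1,…,n}, then br(σ_⟨{p}⟩) ≥ br(σ) − 1. -/
open Finset

namespace Prolific

lemma succAbove_coe {m : ℕ} (q : Fin (m + 1)) (x : Fin m) :
    ((q.succAbove x : Fin (m + 1)) : ℕ) = if (x : ℕ) < (q : ℕ) then (x : ℕ) else (x : ℕ) + 1 := by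
  rw [Fin.succAbove]
  split_ifs with h1 h2 h2
  · simp
  · exact absurd (by simpa [Fin.lt_def] using h1) h2
  · exact absurd (by simpa [Fin.lt_def] using h2) h1
  · simp

lemma image_compl_singleton {m : ℕ} (σ : Equiv.Perm (Fin m)) (p : Fin m) :
    ({p}ᶜ : Finset (Fin m)).image σ = ({σ p}ᶜ : Finset (Fin m)) := by
  ext y
  simp only [Finset.mem_image, Finset.mem_compl, Finset.mem_singleton]
  constructor
  · rintro ⟨x, hx, rfl⟩
    exact fun hc => hx (σ.injective hc)
  · intro hy
    exact ⟨σ.symm y, fun hc => hy (by rw [← hc, Equiv.apply_symm_apply]),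
      Equiv.apply_symm_apply _ _⟩

lemma skip_bound (br x y u v P Q : ℕ)
    (hba : br ≤ Nat.dist (if x < P then x else x + 1) (if y < P then y else y + 1)
      + Nat.dist (if u < Q then u else u + 1) (if v < Q then v else v + 1))
    (h1 : br ≤ Nat.dist (if x < P then x else x + 1) P
      + Nat.dist (if u < Q then u else u + 1) Q)
    (h2 : br ≤ Nat.dist P (if y < P then y else y + 1)
      + Nat.dist Q (if v < Q then v else v + 1)) :
    br - 1 ≤ Nat.dist x y + Nat.dist u v := by
  simp only [Nat.dist] at *
  split_ifs at * <;> omega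

/-- Deleting a single entry from a permutation decreases the breadth by at most one. -/
theorem breadth_delete_one {n : ℕ} (hn : 3 ≤ n) (σ : Equiv.Perm (Fin n)) (p : Fin n)
    (h : ({p}ᶜ : Finset (Fin n)).card = n - 1) :
    breadth σ - 1 ≤ breadth (pattern σ ({p} : Finset (Fin n)) h) := by
  obtain ⟨m, rfl⟩ : ∃ m, n = m + 1 := ⟨n - 1, by omega⟩
  have hm : 2 ≤ m := by omega
  set π : Equiv.Perm (Fin m) := pattern σ ({p} : Finset (Fin (m + 1))) h with hπ
  -- position embedding is succAbove
  have hposf : ∀ i : Fin m,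
      (({p}ᶜ : Finset (Fin (m + 1))).orderEmbOfFin h) i = p.succAbove i := by
    have := Finset.orderEmbOfFin_unique h (f := p.succAbove)
      (fun x => by simp [Fin.succAbove_ne]) (Fin.strictMono_succAbove p)
    exact fun i => (congrFun this i).symm
  have hcard : (({p}ᶜ : Finset (Fin (m + 1))).image σ).card = m := by
    rw [Finset.card_image_of_injective _ σ.injective, h]
    rfl
  have hvalf : ∀ i : Fin m,
      ((({p}ᶜ : Finset (Fin (m + 1))).image σ).orderEmbOfFin hcard) i
        = (σ p).succAbove i := by
    have := Finset.orderEmbOfFin_unique hcard (f := (σ p).succAbove)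
      (fun x => by
        rw [image_compl_singleton σ p]
        simp [Fin.succAbove_ne])
      (Fin.strictMono_succAbove (σ p))
    exact fun i => (congrFun this i).symm
  -- key equation
  have key : ∀ i : Fin m, σ (p.succAbove i) = (σ p).succAbove (π i) := by
    intro i
    have h3 := Equiv.apply_symm_apply
        ((({p}ᶜ : Finset (Fin (m + 1))).image σ).orderIsoOfFin hcard).toEquiv
        ((Equiv.subtypeEquiv (σ : Equiv.Perm (Fin (m + 1))) (fun a => by
          constructor
          · exact fun ha => Finset.mem_image_of_mem σ ha
          · intro ha
            rcases Finset.mem_image.mp ha with ⟨x, hx, hxa⟩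
            rwa [← σ.injective hxa]))
          ((({p}ᶜ : Finset (Fin (m + 1))).orderIsoOfFin h) i))
    rw [← hvalf (π i), ← hposf i]
    exact (congrArg Subtype.val h3).symm
  -- main bound for each pair
  have main : ∀ d ∈ {d : ℕ | ∃ i j : Fin m, i ≠ j ∧ d = dperm π i j},
      breadth σ - 1 ≤ d := by
    rintro d ⟨i, j, hij, rfl⟩
    set a := p.succAbove i with ha
    set b := p.succAbove j with hb
    have hab : a ≠ b := fun hc => hij (Fin.succAbove_right_injective hc)
    have hap : a ≠ p := Fin.succAbove_ne p i
    have hpb : p ≠ b := Fin.ne_succAbove p j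
    have hba : breadth σ ≤ dperm σ a b := Nat.sInf_le ⟨a, b, hab, rfl⟩
    have h1 : breadth σ ≤ dperm σ a p := Nat.sInf_le ⟨a, p, hap, rfl⟩
    have h2 : breadth σ ≤ dperm σ p b := Nat.sInf_le ⟨p, b, hpb, rfl⟩
    have hA : ((a : Fin (m+1)) : ℕ) = if (i : ℕ) < (p : ℕ) then (i : ℕ) else (i : ℕ) + 1 :=
      succAbove_coe p i
    have hB : ((b : Fin (m+1)) : ℕ) = if (j : ℕ) < (p : ℕ) then (j : ℕ) else (j : ℕ) + 1 :=
      succAbove_coe p j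
    have hU : ((σ a : Fin (m+1)) : ℕ)
        = if (π i : ℕ) < (σ p : ℕ) then (π i : ℕ) else (π i : ℕ) + 1 := by
      rw [ha, key i]; exact succAbove_coe (σ p) (π i)
    have hV : ((σ b : Fin (m+1)) : ℕ)
        = if (π j : ℕ) < (σ p : ℕ) then (π j : ℕ) else (π j : ℕ) + 1 := by
      rw [hb, key j]; exact succAbove_coe (σ p) (π j)
    simp only [dperm] at hba h1 h2 ⊢
    rw [hA, hB, hU, hV] at hba
    rw [hA, hU] at h1
    rw [hB, hV] at h2
    exact skip_bound _ _ _ _ _ _ _ hba h1 h2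
  -- conclude
  have hne : {d : ℕ | ∃ i j : Fin m, i ≠ j ∧ d = dperm π i j}.Nonempty := by
    refine ⟨dperm π ⟨0, by omega⟩ ⟨1, by omega⟩, ⟨0, by omega⟩, ⟨1, by omega⟩, ?_, rfl⟩
    simp [Fin.ext_iff]
  exact le_csInf hne main

end Prolific
end

section
/- Let n > k ≥ 1 and let σ be a permutation of size n. If there exist distinct indices i, j with d_σ(i,j) = |i−j| + |σ(i)−σ(j)| < k + 2, then σ is not k-prolific; that is, there exist distinct k-element subsets A, B of {1,…,n} with σ_⟨A⟩ = σ_⟨B⟩. -/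
open Finset

namespace Prolific

lemma perm_eq_of_lt_iff {m : ℕ} (π ρ : Equiv.Perm (Fin m))
    (h : ∀ s t, π s < π t ↔ ρ s < ρ t) : π = ρ := by
  have hmono : StrictMono (fun u => π (ρ.symm u)) := by
    intro u v huv
    exact (h (ρ.symm u) (ρ.symm v)).mpr (by simpa using huv)
  have hsurj : Function.Surjective (fun u => π (ρ.symm u)) :=
    π.surjective.comp ρ.symm.surjective
  let e : Fin m ≃o Fin m := StrictMono.orderIsoOfSurjective _ hmono hsurj
  have : e = OrderIso.refl (Fin m) := Subsingleton.elim _ _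
  have he : ∀ u, π (ρ.symm u) = u := by
    intro u
    have := congrArg (fun f => f u) (congrArg (fun (x : Fin m ≃o Fin m) => (x : Fin m → Fin m)) this)
    simpa [e, StrictMono.coe_orderIsoOfSurjective] using this
  apply Equiv.ext
  intro s
  simpa using he (ρ s)

lemma orderIso_symm_lt {α : Type*} [LinearOrder α] (s : Finset α) {m : ℕ} (h : s.card = m)
    (u v : {x // x ∈ s}) :
    (s.orderIsoOfFin h).symm u < (s.orderIsoOfFin h).symm v ↔ (u : α) < v := by
  rw [OrderIso.lt_iff_lt]
  exact Iff.rfl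

lemma pattern_lt_iff {n m : ℕ} (σ : Equiv.Perm (Fin n)) (A : Finset (Fin n))
    (h : Aᶜ.card = m) (s t : Fin m) :
    pattern σ A h s < pattern σ A h t ↔
      σ (Aᶜ.orderEmbOfFin h s) < σ (Aᶜ.orderEmbOfFin h t) := by
  simp only [pattern, Equiv.trans_apply]
  rw [show ∀ x, ((Aᶜ.image σ).orderIsoOfFin (by rw [Finset.card_image_of_injective _ σ.injective, h])).toEquiv.symm x = ((Aᶜ.image σ).orderIsoOfFin (by rw [Finset.card_image_of_injective _ σ.injective, h])).symm x from fun _ => rfl]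
  exact (orderIso_symm_lt _ _ _ _).trans (by simp [Finset.coe_orderIsoOfFin_apply])

/-- If two distinct entries of `σ` are at distance less than `k + 2`, then `σ` is not
`k`-prolific: some two distinct `k`-element sets of positions yield the same pattern. -/
theorem not_prolific_of_close {n k : ℕ} (hk : 1 ≤ k) (hkn : k < n)
    (σ : Equiv.Perm (Fin n)) (i j : Fin n) (hij : i ≠ j)
    (hd : dperm σ i j < k + 2) :
    ∃ A B : Finset (Fin n), A.card = k ∧ B.card = k ∧ A ≠ B ∧ PatternEq σ A B := by
  classical
  have hσij : σ i ≠ σ j := fun h => hij (σ.injective h)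
  have hpq : (i : ℕ) ≠ (j : ℕ) := fun h => hij (Fin.val_injective h)
  have huv : (σ i : ℕ) ≠ (σ j : ℕ) := fun h => hσij (Fin.val_injective h)
  set P : Finset (Fin n) := univ.filter (fun x : Fin n =>
    ((i : ℕ) < (x : ℕ) ∧ (x : ℕ) < (j : ℕ)) ∨ ((j : ℕ) < (x : ℕ) ∧ (x : ℕ) < (i : ℕ))) with hPdef
  set V : Finset (Fin n) := univ.filter (fun x : Fin n =>
    ((σ i : ℕ) < (σ x : ℕ) ∧ (σ x : ℕ) < (σ j : ℕ)) ∨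
    ((σ j : ℕ) < (σ x : ℕ) ∧ (σ x : ℕ) < (σ i : ℕ))) with hVdef
  set S : Finset (Fin n) := P ∪ V with hSdef
  -- card bounds
  have hPcard : P.card ≤ Nat.dist (i : ℕ) (j : ℕ) - 1 := by
    have h1 : P.image (fun x : Fin n => (x : ℕ)) ⊆
        Finset.Ioo (min (i : ℕ) (j : ℕ)) (max (i : ℕ) (j : ℕ)) := by
      intro a ha
      simp only [mem_image, hPdef, mem_filter, mem_univ, true_and] at ha
      obtain ⟨x, hx, rfl⟩ := ha
      simp only [mem_Ioo]
      omega
    have h2 := Finset.card_le_card h1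
    rw [Finset.card_image_of_injective _ Fin.val_injective, Nat.card_Ioo] at h2
    simp only [Nat.dist]
    omega
  have hVcard : V.card ≤ Nat.dist (σ i : ℕ) (σ j : ℕ) - 1 := by
    have h1 : V.image (fun x : Fin n => (σ x : ℕ)) ⊆
        Finset.Ioo (min (σ i : ℕ) (σ j : ℕ)) (max (σ i : ℕ) (σ j : ℕ)) := by
      intro a ha
      simp only [mem_image, hVdef, mem_filter, mem_univ, true_and] at ha
      obtain ⟨x, hx, rfl⟩ := ha
      simp only [mem_Ioo]
      omega
    have h2 := Finset.card_le_card h1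
    rw [Finset.card_image_of_injective _ (show Function.Injective (fun x : Fin n => (σ x : ℕ)) from fun x y hxy => σ.injective (Fin.val_injective hxy)), Nat.card_Ioo] at h2
    simp only [Nat.dist]
    omega
  have hdd : Nat.dist (i : ℕ) (j : ℕ) + Nat.dist (σ i : ℕ) (σ j : ℕ) ≤ k + 1 := by
    simpa [dperm] using Nat.lt_succ_iff.mp hd
  have hdp : 1 ≤ Nat.dist (i : ℕ) (j : ℕ) := by simp only [Nat.dist]; omega
  have hdv : 1 ≤ Nat.dist (σ i : ℕ) (σ j : ℕ) := by simp only [Nat.dist]; omega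
  have hScard : S.card + 1 ≤ k := by
    have := Finset.card_union_le P V
    rw [← hSdef] at this
    omega
  have hiS : i ∉ S := by
    simp only [hSdef, hPdef, hVdef, mem_union, mem_filter, mem_univ, true_and]
    omega
  have hjS : j ∉ S := by
    simp only [hSdef, hPdef, hVdef, mem_union, mem_filter, mem_univ, true_and]
    omega
  -- padding set
  set T : Finset (Fin n) := univ \ (insert i (insert j S)) with hTdef
  have hTcard : T.card = n - (S.card + 2) := by
    rw [hTdef, Finset.card_sdiff_of_subset (Finset.subset_univ _), Finset.card_insert_of_notMem,
      Finset.card_insert_of_notMem hjS, card_univ, Fintype.card_fin]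
    simp only [mem_insert]
    push_neg
    exact ⟨hij, hiS⟩
  obtain ⟨E, hET, hEcard⟩ := Finset.exists_subset_card_eq (s := T) (n := k - 1 - S.card) (by omega)
  have hiE : i ∉ E := fun h => by
    have := hET h
    simp [hTdef] at this
  have hjE : j ∉ E := fun h => by
    have := hET h
    simp [hTdef] at this
  have hSE : Disjoint S E := by
    rw [Finset.disjoint_right]
    intro x hx hxS
    have := hET hx
    simp [hTdef] at this
    exact this.2.2 hxS
  set A : Finset (Fin n) := insert i (S ∪ E) with hAdef
  set B : Finset (Fin n) := insert j (S ∪ E) with hBdef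
  have hiSE : i ∉ S ∪ E := by simp [hiS, hiE]
  have hjSE : j ∉ S ∪ E := by simp [hjS, hjE]
  have hAcard : A.card = k := by
    rw [hAdef, Finset.card_insert_of_notMem hiSE, Finset.card_union_of_disjoint hSE]
    omega
  have hBcard : B.card = k := by
    rw [hBdef, Finset.card_insert_of_notMem hjSE, Finset.card_union_of_disjoint hSE]
    omega
  have hAB : A ≠ B := by
    intro h
    have : i ∈ B := h ▸ Finset.mem_insert_self i (S ∪ E)
    rw [hBdef, Finset.mem_insert] at this
    exact absurd this (by simp [hij, hiSE])
  -- complements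
  have hA : Aᶜ.card = n - k := by
    rw [Finset.card_compl, Fintype.card_fin, hAcard]
  have hB : Bᶜ.card = n - k := by
    rw [Finset.card_compl, Fintype.card_fin, hBcard]
  have hAc : ∀ x : Fin n, x ∈ Aᶜ ↔ (x ≠ i ∧ x ∉ S ∧ x ∉ E) := by
    intro x
    simp only [hAdef, Finset.mem_compl, Finset.mem_insert, Finset.mem_union, not_or]
  have hBc : ∀ x : Fin n, x ∈ Bᶜ ↔ (x ≠ j ∧ x ∉ S ∧ x ∉ E) := by
    intro x
    simp only [hBdef, Finset.mem_compl, Finset.mem_insert, Finset.mem_union, not_or]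
  -- facts about elements not in S and distinct from i, j
  have hnb : ∀ x : Fin n, x ∉ S → x ≠ i → x ≠ j →
      (¬((i : ℕ) < (x : ℕ) ∧ (x : ℕ) < (j : ℕ)) ∧ ¬((j : ℕ) < (x : ℕ) ∧ (x : ℕ) < (i : ℕ)) ∧
       ¬((σ i : ℕ) < (σ x : ℕ) ∧ (σ x : ℕ) < (σ j : ℕ)) ∧
       ¬((σ j : ℕ) < (σ x : ℕ) ∧ (σ x : ℕ) < (σ i : ℕ)) ∧
       (x : ℕ) ≠ (i : ℕ) ∧ (x : ℕ) ≠ (j : ℕ) ∧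
       (σ x : ℕ) ≠ (σ i : ℕ) ∧ (σ x : ℕ) ≠ (σ j : ℕ)) := by
    intro x hxS hxi hxj
    simp only [hSdef, hPdef, hVdef, mem_union, mem_filter, mem_univ, true_and, not_or] at hxS
    exact ⟨hxS.1.1, hxS.1.2, hxS.2.1, hxS.2.2,
      fun h => hxi (Fin.val_injective h), fun h => hxj (Fin.val_injective h),
      fun h => hxi (σ.injective (Fin.val_injective h)),
      fun h => hxj (σ.injective (Fin.val_injective h))⟩
  set w : Equiv.Perm (Fin n) := Equiv.swap i j with hwdef
  have hwmem : ∀ x ∈ Aᶜ, w x ∈ Bᶜ := by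
    intro x hx
    rw [hAc] at hx
    rcases eq_or_ne x j with hxe | hxj
    · rw [hxe, hwdef, Equiv.swap_apply_right, hBc]
      exact ⟨hij, hiS, hiE⟩
    · rw [hwdef, Equiv.swap_apply_of_ne_of_ne hx.1 hxj, hBc]
      exact ⟨hxj, hx.2⟩
  have hposIff : ∀ x ∈ Aᶜ, ∀ y ∈ Aᶜ, (x < y ↔ w x < w y) := by
    intro x hx y hy
    rw [hAc] at hx hy
    rcases eq_or_ne x j with hxe | hxj <;> rcases eq_or_ne y j with hye | hyj
    · simp [hxe, hye]
    · obtain ⟨h1, h2, h3, h4, h5, h6, h7, h8⟩ := hnb y hy.2.1 hy.1 hyj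
      rw [hxe, hwdef, Equiv.swap_apply_right, Equiv.swap_apply_of_ne_of_ne hy.1 hyj]
      simp only [Fin.lt_def]
      omega
    · obtain ⟨h1, h2, h3, h4, h5, h6, h7, h8⟩ := hnb x hx.2.1 hx.1 hxj
      rw [hye, hwdef, Equiv.swap_apply_right, Equiv.swap_apply_of_ne_of_ne hx.1 hxj]
      simp only [Fin.lt_def]
      omega
    · rw [hwdef, Equiv.swap_apply_of_ne_of_ne hx.1 hxj, Equiv.swap_apply_of_ne_of_ne hy.1 hyj]
  have hvalIff : ∀ x ∈ Aᶜ, ∀ y ∈ Aᶜ, (σ x < σ y ↔ σ (w x) < σ (w y)) := by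
    intro x hx y hy
    rw [hAc] at hx hy
    rcases eq_or_ne x j with hxe | hxj <;> rcases eq_or_ne y j with hye | hyj
    · simp [hxe, hye]
    · obtain ⟨h1, h2, h3, h4, h5, h6, h7, h8⟩ := hnb y hy.2.1 hy.1 hyj
      rw [hxe, hwdef, Equiv.swap_apply_right, Equiv.swap_apply_of_ne_of_ne hy.1 hyj]
      simp only [Fin.lt_def]
      omega
    · obtain ⟨h1, h2, h3, h4, h5, h6, h7, h8⟩ := hnb x hx.2.1 hx.1 hxj
      rw [hye, hwdef, Equiv.swap_apply_right, Equiv.swap_apply_of_ne_of_ne hx.1 hxj]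
      simp only [Fin.lt_def]
      omega
    · rw [hwdef, Equiv.swap_apply_of_ne_of_ne hx.1 hxj, Equiv.swap_apply_of_ne_of_ne hy.1 hyj]
  refine ⟨A, B, hAcard, hBcard, hAB, n - k, hA, hB, ?_⟩
  apply perm_eq_of_lt_iff
  intro s t
  rw [pattern_lt_iff, pattern_lt_iff]
  have hmemA : ∀ s : Fin (n - k), Aᶜ.orderEmbOfFin hA s ∈ Aᶜ :=
    fun s => Finset.orderEmbOfFin_mem Aᶜ hA s
  have hg : (fun s : Fin (n - k) => w (Aᶜ.orderEmbOfFin hA s)) = ⇑(Bᶜ.orderEmbOfFin hB) := by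
    apply Finset.orderEmbOfFin_unique hB
    · exact fun x => hwmem _ (hmemA x)
    · intro a b hab
      exact (hposIff _ (hmemA a) _ (hmemA b)).mp ((Aᶜ.orderEmbOfFin hA).strictMono hab)
  rw [← congrFun hg s, ← congrFun hg t]
  exact hvalIff _ (hmemA s) _ (hmemA t)

end Prolific
end

section
/- Let σ be a permutation of size n, let i ≠ j be indices, and let S be the span of i and j in σ. Then |S| ≤ d_σ(i,j) − 2, and for every set of indices X ⊆ {1,…,n} with i ∉ X and j ∉ X one has σ_⟨S ∪ {i} ∪ X⟩ = σ_⟨S ∪ {j} ∪ X⟩; in particular σ_⟨S ∪ {i}⟩ = σ_⟨S ∪ {j}⟩. -/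
open Finset

namespace Prolific

/-- The span of `i` and `j` in `σ`: entries (other than `i` and `j`) whose position lies
strictly between `i` and `j` or whose value lies strictly between `σ i` and `σ j`. -/
def span {n : ℕ} (σ : Equiv.Perm (Fin n)) (i j : Fin n) : Finset (Fin n) :=
  univ.filter fun p => p ≠ i ∧ p ≠ j ∧
    (((i < p ∧ p < j) ∨ (j < p ∧ p < i)) ∨
      ((σ i < σ p ∧ σ p < σ j) ∨ (σ j < σ p ∧ σ p < σ i)))

lemma idx_eq {α : Type*} [LinearOrder α] {m : ℕ} (s : Finset α) (h : s.card = m)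
    (x : α) (hx : x ∈ s) :
    (((s.orderIsoOfFin h).symm ⟨x, hx⟩ : Fin m) : ℕ) = (s.filter (· < x)).card := by
  set k := (s.orderIsoOfFin h).symm ⟨x, hx⟩ with hk
  have hex : s.orderIsoOfFin h k = ⟨x, hx⟩ := by rw [hk]; exact (s.orderIsoOfFin h).apply_symm_apply _
  have hxk : x = s.orderEmbOfFin h k := by
    rw [← Finset.coe_orderIsoOfFin_apply, hex]
  have himg : s.filter (· < x) = (Finset.Iio k).image (s.orderEmbOfFin h) := by
    ext y
    simp only [mem_filter, mem_image, mem_Iio]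
    constructor
    · rintro ⟨hy, hlt⟩
      refine ⟨(s.orderIsoOfFin h).symm ⟨y, hy⟩, ?_, ?_⟩
      · rw [hk]
        exact (OrderIso.lt_iff_lt _).mpr (Subtype.mk_lt_mk.mpr hlt)
      · rw [← Finset.coe_orderIsoOfFin_apply, (s.orderIsoOfFin h).apply_symm_apply]
    · rintro ⟨l, hl, rfl⟩
      exact ⟨s.orderEmbOfFin_mem h l, hxk ▸ (s.orderEmbOfFin h).strictMono hl⟩
  rw [himg, Finset.card_image_of_injective _ (s.orderEmbOfFin h).injective, Fin.card_Iio]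

lemma pattern_apply {n m : ℕ} (σ : Equiv.Perm (Fin n)) (A : Finset (Fin n))
    (h : Aᶜ.card = m) (k : Fin m) :
    ((pattern σ A h k : Fin m) : ℕ)
      = ((Aᶜ.image σ).filter (· < σ (Aᶜ.orderEmbOfFin h k))).card := by
  exact idx_eq (Aᶜ.image σ) (by rw [Finset.card_image_of_injective _ σ.injective, h])
    (σ (Aᶜ.orderEmbOfFin h k))
    (Finset.mem_image_of_mem σ (Finset.orderEmbOfFin_mem _ h k))

lemma pattern_congr {n m : ℕ} (σ : Equiv.Perm (Fin n)) (A B : Finset (Fin n))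
    (hA : Aᶜ.card = m) (hB : Bᶜ.card = m) (f : Fin n → Fin n)
    (hmem : ∀ p ∈ Aᶜ, f p ∈ Bᶜ)
    (hmono : ∀ p ∈ Aᶜ, ∀ q ∈ Aᶜ, p < q → f p < f q)
    (hvmono : ∀ p ∈ Aᶜ, ∀ q ∈ Aᶜ, σ p < σ q → σ (f p) < σ (f q)) :
    pattern σ A hA = pattern σ B hB := by
  have hinj : ∀ p ∈ Aᶜ, ∀ q ∈ Aᶜ, f p = f q → p = q := by
    intro p hp q hq hfe
    rcases lt_trichotomy p q with h' | h' | h'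
    · exact absurd (hmono p hp q hq h') (by rw [hfe]; exact lt_irrefl _)
    · exact h'
    · exact absurd (hmono q hq p hp h') (by rw [hfe]; exact lt_irrefl _)
  have hsurj : ∀ b ∈ Bᶜ, ∃ p ∈ Aᶜ, f p = b := by
    intro b hb
    obtain ⟨p, hp, hpe⟩ := Finset.surj_on_of_inj_on_of_card_le (fun p _ => f p)
      (fun p hp => hmem p hp) (fun p q hp hq => hinj p hp q hq) (by rw [hA, hB]) b hb
    exact ⟨p, hp, hpe.symm⟩
  have hviff : ∀ p ∈ Aᶜ, ∀ q ∈ Aᶜ, (σ p < σ q ↔ σ (f p) < σ (f q)) := by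
    intro p hp q hq
    refine ⟨hvmono p hp q hq, fun h' => ?_⟩
    rcases lt_trichotomy (σ p) (σ q) with h'' | h'' | h''
    · exact h''
    · exact absurd h' (by rw [σ.injective h'']; exact lt_irrefl _)
    · exact absurd (h'.trans (hvmono q hq p hp h'')) (lt_irrefl _)
  have hemb : (fun k : Fin m => f (Aᶜ.orderEmbOfFin hA k)) = Bᶜ.orderEmbOfFin hB := by
    apply Finset.orderEmbOfFin_unique
    · exact fun k => hmem _ (Finset.orderEmbOfFin_mem _ hA k)
    · intro k l hkl
      exact hmono _ (Finset.orderEmbOfFin_mem _ hA k) _ (Finset.orderEmbOfFin_mem _ hA l)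
        ((Aᶜ.orderEmbOfFin hA).strictMono hkl)
  ext k
  rw [pattern_apply, pattern_apply]
  have hbk : Bᶜ.orderEmbOfFin hB k = f (Aᶜ.orderEmbOfFin hA k) := by rw [← hemb]
  rw [hbk]
  set a : Fin n := Aᶜ.orderEmbOfFin hA k with ha
  have haA : a ∈ Aᶜ := Finset.orderEmbOfFin_mem _ hA k
  apply Finset.card_bij (fun v _ => σ (f (σ.symm v)))
  · intro v hv
    simp only [mem_filter, mem_image] at hv ⊢
    obtain ⟨⟨p, hp, rfl⟩, hlt⟩ := hv
    rw [Equiv.symm_apply_apply]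
    exact ⟨⟨f p, hmem p hp, rfl⟩, hvmono p hp a haA hlt⟩
  · intro v hv w hw hvw
    simp only [mem_filter, mem_image] at hv hw
    obtain ⟨⟨p, hp, rfl⟩, -⟩ := hv
    obtain ⟨⟨q, hq, rfl⟩, -⟩ := hw
    rw [Equiv.symm_apply_apply, Equiv.symm_apply_apply] at hvw
    exact congrArg σ (hinj p hp q hq (σ.injective hvw))
  · intro w hw
    simp only [mem_filter, mem_image] at hw
    obtain ⟨⟨b', hb', rfl⟩, hlt⟩ := hw
    obtain ⟨p, hp, hfp⟩ := hsurj b' hb'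
    refine ⟨σ p, ?_, ?_⟩
    · simp only [mem_filter, mem_image]
      refine ⟨⟨p, hp, rfl⟩, (hviff p hp a haA).mpr ?_⟩
      rw [hfp]; exact hlt
    · rw [Equiv.symm_apply_apply, hfp]

lemma span_compare {n : ℕ} {σ : Equiv.Perm (Fin n)} {i j p : Fin n}
    (hp : p ∉ span σ i j) (hpi : p ≠ i) (hpj : p ≠ j) :
    (p < j ↔ p < i) ∧ (j < p ↔ i < p) ∧
    (σ p < σ j ↔ σ p < σ i) ∧ (σ j < σ p ↔ σ i < σ p) := by
  simp only [span, mem_filter, mem_univ, true_and, not_and, not_or] at hp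
  have h := hp hpi hpj
  have h1 : (p : ℕ) ≠ i := fun he => hpi (Fin.ext he)
  have h2 : (p : ℕ) ≠ j := fun he => hpj (Fin.ext he)
  have h3 : (σ p : ℕ) ≠ σ i := fun he => hpi (σ.injective (Fin.ext he))
  have h4 : (σ p : ℕ) ≠ σ j := fun he => hpj (σ.injective (Fin.ext he))
  simp only [Fin.lt_def, not_and, not_lt] at h ⊢
  omega

/-- Deleting the span together with either one of `i`, `j` (and any further common set of
positions `X`) yields the same pattern; moreover the span has at most `d_σ(i,j) - 2`
elements. -/
theorem span_deletion {n : ℕ} (σ : Equiv.Perm (Fin n)) (i j : Fin n) (hij : i ≠ j) :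
    (span σ i j).card ≤ dperm σ i j - 2 ∧
    (∀ X : Finset (Fin n), i ∉ X → j ∉ X →
      PatternEq σ (span σ i j ∪ {i} ∪ X) (span σ i j ∪ {j} ∪ X)) ∧
    PatternEq σ (insert i (span σ i j)) (insert j (span σ i j)) := by
  have hiS : i ∉ span σ i j := by simp [span]
  have hjS : j ∉ span σ i j := by simp [span]
  have hmain : ∀ X : Finset (Fin n), i ∉ X → j ∉ X →
      PatternEq σ (span σ i j ∪ {i} ∪ X) (span σ i j ∪ {j} ∪ X) := by
    intro X hiX hjX
    set S := span σ i j with hS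
    have hAeq : S ∪ {i} ∪ X = insert i (S ∪ X) := by
      ext p; simp [Finset.mem_insert, Finset.mem_union]
    have hBeq : S ∪ {j} ∪ X = insert j (S ∪ X) := by
      ext p; simp [Finset.mem_insert, Finset.mem_union]
    have hiC : i ∉ S ∪ X := by simp [hiS, hiX]
    have hjC : j ∉ S ∪ X := by simp [hjS, hjX]
    have hcard : (S ∪ {j} ∪ X).card = (S ∪ {i} ∪ X).card := by
      rw [hAeq, hBeq, Finset.card_insert_of_notMem hiC, Finset.card_insert_of_notMem hjC]
    refine ⟨(S ∪ {i} ∪ X)ᶜ.card, rfl, by rw [Finset.card_compl, Finset.card_compl, hcard], ?_⟩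
    -- membership characterizations
    have hmemA : ∀ p : Fin n, p ∈ (S ∪ {i} ∪ X)ᶜ ↔ (p ≠ i ∧ p ∉ S ∪ X) := by
      intro p; rw [Finset.mem_compl, hAeq, Finset.mem_insert]; tauto
    have hmemB : ∀ p : Fin n, p ∈ (S ∪ {j} ∪ X)ᶜ ↔ (p ≠ j ∧ p ∉ S ∪ X) := by
      intro p; rw [Finset.mem_compl, hBeq, Finset.mem_insert]; tauto
    have hSp : ∀ p : Fin n, p ∉ S ∪ X → p ∉ S := by
      intro p hp hc; exact hp (Finset.mem_union_left _ hc)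
    apply pattern_congr σ _ _ _ _ (Equiv.swap i j)
    · -- hmem
      intro p hp
      rw [hmemA] at hp
      obtain ⟨hpi, hpC⟩ := hp
      rw [hmemB]
      by_cases hpj : p = j
      · subst hpj
        rw [Equiv.swap_apply_right]
        exact ⟨hij, hiC⟩
      · rw [Equiv.swap_apply_of_ne_of_ne hpi hpj]
        exact ⟨hpj, hpC⟩
    · -- hmono
      intro p hp q hq hpq
      rw [hmemA] at hp hq
      obtain ⟨hpi, hpC⟩ := hp
      obtain ⟨hqi, hqC⟩ := hq
      by_cases hpj : p = j
      · subst hpj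
        have hqj : q ≠ p := (ne_of_gt hpq)
        rw [Equiv.swap_apply_right, Equiv.swap_apply_of_ne_of_ne hqi hqj]
        exact ((span_compare (hSp q hqC) hqi hqj).2.1).mp hpq
      · by_cases hqj : q = j
        · subst hqj
          rw [Equiv.swap_apply_right, Equiv.swap_apply_of_ne_of_ne hpi hpj]
          exact ((span_compare (hSp p hpC) hpi hpj).1).mp hpq
        · rw [Equiv.swap_apply_of_ne_of_ne hpi hpj, Equiv.swap_apply_of_ne_of_ne hqi hqj]
          exact hpq
    · -- hvmono
      intro p hp q hq hpq
      rw [hmemA] at hp hq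
      obtain ⟨hpi, hpC⟩ := hp
      obtain ⟨hqi, hqC⟩ := hq
      by_cases hpj : p = j
      · subst hpj
        have hqj : q ≠ p := fun he => (ne_of_lt hpq) (congrArg σ he.symm)
        rw [Equiv.swap_apply_right, Equiv.swap_apply_of_ne_of_ne hqi hqj]
        exact ((span_compare (hSp q hqC) hqi hqj).2.2.2).mp hpq
      · by_cases hqj : q = j
        · subst hqj
          rw [Equiv.swap_apply_right, Equiv.swap_apply_of_ne_of_ne hpi hpj]
          exact ((span_compare (hSp p hpC) hpi hpj).2.2.1).mp hpq
        · rw [Equiv.swap_apply_of_ne_of_ne hpi hpj, Equiv.swap_apply_of_ne_of_ne hqi hqj]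
          exact hpq
  refine ⟨?_, hmain, ?_⟩
  · -- cardinality bound
    have hsub : span σ i j ⊆ (Ioo i j ∪ Ioo j i) ∪
        ((Ioo (σ i) (σ j) ∪ Ioo (σ j) (σ i)).image σ.symm) := by
      intro p hp
      simp only [span, mem_filter, mem_univ, true_and] at hp
      obtain ⟨hpi, hpj, hcase⟩ := hp
      rcases hcase with (⟨h1, h2⟩ | ⟨h1, h2⟩) | (⟨h1, h2⟩ | ⟨h1, h2⟩)
      · exact Finset.mem_union_left _ (Finset.mem_union_left _ (Finset.mem_Ioo.mpr ⟨h1, h2⟩))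
      · exact Finset.mem_union_left _ (Finset.mem_union_right _ (Finset.mem_Ioo.mpr ⟨h1, h2⟩))
      · refine Finset.mem_union_right _ (Finset.mem_image.mpr ⟨σ p, ?_, by simp⟩)
        exact Finset.mem_union_left _ (Finset.mem_Ioo.mpr ⟨h1, h2⟩)
      · refine Finset.mem_union_right _ (Finset.mem_image.mpr ⟨σ p, ?_, by simp⟩)
        exact Finset.mem_union_right _ (Finset.mem_Ioo.mpr ⟨h1, h2⟩)
    have h1 := Finset.card_le_card hsub
    have h2 := Finset.card_union_le (Ioo i j ∪ Ioo j i)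
      ((Ioo (σ i) (σ j) ∪ Ioo (σ j) (σ i)).image σ.symm)
    have h3 := Finset.card_union_le (Ioo i j) (Ioo j i)
    have h4 := Finset.card_union_le (Ioo (σ i) (σ j)) (Ioo (σ j) (σ i))
    have h5 : ((Ioo (σ i) (σ j) ∪ Ioo (σ j) (σ i)).image σ.symm).card
        = (Ioo (σ i) (σ j) ∪ Ioo (σ j) (σ i)).card :=
      Finset.card_image_of_injective _ σ.symm.injective
    rw [Fin.card_Ioo, Fin.card_Ioo] at h3
    rw [Fin.card_Ioo, Fin.card_Ioo] at h4
    have hne1 : (i : ℕ) ≠ j := fun he => hij (Fin.ext he)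
    have hne2 : (σ i : ℕ) ≠ σ j := fun he => hij (σ.injective (Fin.ext he))
    simp only [dperm, Nat.dist]
    omega
  · -- special case X = ∅
    have h := hmain ∅ (Finset.notMem_empty i) (Finset.notMem_empty j)
    rw [Finset.union_empty, Finset.union_empty] at h
    rwa [Finset.union_comm _ {i}, Finset.union_comm _ {j}, ← Finset.insert_eq,
      ← Finset.insert_eq] at h


end Prolific
end

section
/- For any permutation σ of size n ≥ 2 and any distinct indices i, j, one has d_σ(i,j) = 2 + |span(i,j)| + |central span(i,j)|. -/
open Finset

namespace Prolific

/-- The central span of `i` and `j` in `σ`: entries whose position lies strictly between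
`i` and `j` and whose value lies strictly between `σ i` and `σ j`. -/
def centralSpan {n : ℕ} (σ : Equiv.Perm (Fin n)) (i j : Fin n) : Finset (Fin n) :=
  univ.filter fun p =>
    ((i < p ∧ p < j) ∨ (j < p ∧ p < i)) ∧
    ((σ i < σ p ∧ σ p < σ j) ∨ (σ j < σ p ∧ σ p < σ i))

lemma aux_lt {n : ℕ} (a b : Fin n) (hab : a < b) :
    Nat.dist (a : ℕ) (b : ℕ) =
      (univ.filter fun p => (a < p ∧ p < b) ∨ (b < p ∧ p < a)).card + 1 := by
  have hset : (univ.filter fun p : Fin n => (a < p ∧ p < b) ∨ (b < p ∧ p < a)) = Ioo a b := by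
    ext p
    simp only [mem_filter, mem_univ, true_and, mem_Ioo]
    constructor
    · rintro (⟨h1, h2⟩ | ⟨h1, h2⟩)
      · exact ⟨h1, h2⟩
      · exact absurd (h1.trans h2) (lt_asymm hab)
    · exact fun h => Or.inl h
  rw [hset, Fin.card_Ioo, Nat.dist_eq_sub_of_le (le_of_lt hab)]
  have : (a : ℕ) < b := hab
  omega

lemma aux {n : ℕ} (a b : Fin n) (hab : a ≠ b) :
    Nat.dist (a : ℕ) (b : ℕ) =
      (univ.filter fun p => (a < p ∧ p < b) ∨ (b < p ∧ p < a)).card + 1 := by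
  rcases lt_or_gt_of_ne hab with h | h
  · exact aux_lt a b h
  · rw [Nat.dist_comm]
    have := aux_lt b a h
    rw [this]
    congr 2
    ext p
    simp only [mem_filter, mem_univ, true_and]
    tauto

/-- `d_σ(i,j) = 2 + |span(i,j)| + |central span(i,j)|`. -/
theorem dperm_eq_span_add_centralSpan {n : ℕ} (hn : 2 ≤ n) (σ : Equiv.Perm (Fin n))
    (i j : Fin n) (hij : i ≠ j) :
    dperm σ i j = 2 + (span σ i j).card + (centralSpan σ i j).card := by
  have hσij : σ i ≠ σ j := fun h => hij (σ.injective h)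
  have hspan : span σ i j = univ.filter fun p =>
      ((i < p ∧ p < j) ∨ (j < p ∧ p < i)) ∨
        ((σ i < σ p ∧ σ p < σ j) ∨ (σ j < σ p ∧ σ p < σ i)) := by
    ext p
    simp only [span, mem_filter, mem_univ, true_and]
    constructor
    · rintro ⟨-, -, h⟩; exact h
    · intro h
      refine ⟨?_, ?_, h⟩
      · rintro rfl
        rcases h with (⟨h1, h2⟩ | ⟨h1, h2⟩) | (⟨h1, h2⟩ | ⟨h1, h2⟩) <;>
          first
          | exact absurd h1 (lt_irrefl _)
          | exact absurd h2 (lt_irrefl _)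
      · rintro rfl
        rcases h with (⟨h1, h2⟩ | ⟨h1, h2⟩) | (⟨h1, h2⟩ | ⟨h1, h2⟩) <;>
          first
          | exact absurd h1 (lt_irrefl _)
          | exact absurd h2 (lt_irrefl _)
  have hQcard : (univ.filter fun p =>
        (σ i < σ p ∧ σ p < σ j) ∨ (σ j < σ p ∧ σ p < σ i)).card =
      (univ.filter fun q => (σ i < q ∧ q < σ j) ∨ (σ j < q ∧ q < σ i)).card := by
    apply Finset.card_bij' (fun p _ => σ p) (fun q _ => σ.symm q)
    · intro p hp
      simp only [mem_filter, mem_univ, true_and] at hp ⊢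
      exact hp
    · intro q hq
      simp only [mem_filter, mem_univ, true_and, Equiv.apply_symm_apply] at hq ⊢
      exact hq
    · intro p _; exact σ.symm_apply_apply p
    · intro q _; exact σ.apply_symm_apply q
  have hIE : (span σ i j).card + (centralSpan σ i j).card =
      (univ.filter fun p => (i < p ∧ p < j) ∨ (j < p ∧ p < i)).card +
      (univ.filter fun p =>
        (σ i < σ p ∧ σ p < σ j) ∨ (σ j < σ p ∧ σ p < σ i)).card := by
    rw [hspan, centralSpan, filter_or, filter_and, card_union_add_card_inter]
  have h1 := aux i j hij
  have h2 := aux (σ i) (σ j) hσij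
  rw [dperm, h1, h2]
  omega

end Prolific
end

section
/- Let k ≥ 1 be odd, let m = (k² + 4k + 3)/2, and let σ_k be the permutation of {1,…,m} given by σ_k(i) = i(k+2) mod (m+1). Then for all distinct i, j ∈ {1,…,m}, |i−j| + |σ_k(i)−σ_k(j)| ≥ k + 2 (i.e., br(σ_k) ≥ k+2); consequently σ_k is a k-prolific permutation of size ⌈k²/2 + 2k + 1⌉. -/
open Finset

namespace Prolific

/-! ### Auxiliary lemmas -/

lemma nat_dist_natAbs (a b : ℕ) : Nat.dist a b = ((a:ℤ) - b).natAbs := by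
  simp [Nat.dist]; omega

/-- The key arithmetic rigidity: if two quantities `dx, dy` of absolute value at most
`k = 2u+1` satisfy `dy ≡ dx·(k+2)` modulo `m+1 = 2u²+6u+5`, and `dx ≠ 0`, then
`(dx, dy)` is one of four rigid vectors of total length `k+2`. -/
lemma rigid (u : ℕ) (dx dy : ℤ) (hx : dx.natAbs ≤ 2*u+1) (hy : dy.natAbs ≤ 2*u+1)
    (hx0 : dx ≠ 0)
    (hdvd : (2*(u:ℤ)*u+6*u+5) ∣ (dy - dx*(2*u+3))) :
    (dx = u+1 ∧ dy = -(u:ℤ)-2) ∨ (dx = -(u:ℤ)-1 ∧ dy = u+2) ∨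
    (dx = u+2 ∧ dy = u+1) ∨ (dx = -(u:ℤ)-2 ∧ dy = -(u:ℤ)-1) := by
  obtain ⟨c, hc⟩ := hdvd
  have hu : (0:ℤ) ≤ (u:ℤ) := Int.natCast_nonneg u
  have hx1 : -(2*(u:ℤ)+1) ≤ dx ∧ dx ≤ 2*(u:ℤ)+1 := by constructor <;> omega
  have hy1 : -(2*(u:ℤ)+1) ≤ dy ∧ dy ≤ 2*(u:ℤ)+1 := by constructor <;> omega
  obtain ⟨hx1, hx2⟩ := hx1; obtain ⟨hy1, hy2⟩ := hy1
  have hc3 : c = -1 ∨ c = 0 ∨ c = 1 := by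
    by_contra h
    push_neg at h
    have h2 : c ≤ -2 ∨ 2 ≤ c := by omega
    rcases h2 with h2 | h2
    · have p1 : (2*(u:ℤ)*u+6*u+5) * c ≤ (2*(u:ℤ)*u+6*u+5) * (-2) := by
        apply mul_le_mul_of_nonneg_left h2; nlinarith
      have p2 : dx*(2*(u:ℤ)+3) ≤ (2*(u:ℤ)+1)*(2*u+3) := by
        apply mul_le_mul_of_nonneg_right hx2; linarith
      nlinarith
    · have p1 : (2*(u:ℤ)*u+6*u+5) * 2 ≤ (2*(u:ℤ)*u+6*u+5) * c := by
        apply mul_le_mul_of_nonneg_left h2; nlinarith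
      have p2 : -((2*(u:ℤ)+1)*(2*u+3)) ≤ dx*(2*(u:ℤ)+3) := by
        have := mul_le_mul_of_nonneg_right hx1 (show (0:ℤ) ≤ 2*u+3 by linarith)
        linarith
      nlinarith
  rcases hc3 with rfl | rfl | rfl
  · have heq : dy = dx*(2*(u:ℤ)+3) - (2*(u:ℤ)*u+6*u+5) := by linarith
    have hd1 : dx ≥ (u:ℤ)+1 := by
      by_contra h
      push_neg at h
      have h' : dx ≤ (u:ℤ) := by omega
      have : dx*(2*(u:ℤ)+3) ≤ (u:ℤ)*(2*u+3) :=
        mul_le_mul_of_nonneg_right h' (by linarith)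
      nlinarith
    have hd2 : dx ≤ (u:ℤ)+2 := by
      by_contra h
      push_neg at h
      have h' : (u:ℤ)+3 ≤ dx := by omega
      have : ((u:ℤ)+3)*(2*u+3) ≤ dx*(2*(u:ℤ)+3) :=
        mul_le_mul_of_nonneg_right h' (by linarith)
      nlinarith
    have : dx = (u:ℤ)+1 ∨ dx = (u:ℤ)+2 := by omega
    rcases this with rfl | rfl
    · left; exact ⟨rfl, by nlinarith [heq]⟩
    · right; right; left; exact ⟨rfl, by nlinarith [heq]⟩
  · have heq : dy = dx*(2*(u:ℤ)+3) := by linarith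
    rcases lt_or_gt_of_ne hx0 with h | h
    · have h' : dx ≤ -1 := by omega
      have : dx*(2*(u:ℤ)+3) ≤ (-1)*(2*(u:ℤ)+3) :=
        mul_le_mul_of_nonneg_right h' (by linarith)
      exfalso; nlinarith
    · have h' : (1:ℤ) ≤ dx := by omega
      have : (1:ℤ)*(2*(u:ℤ)+3) ≤ dx*(2*(u:ℤ)+3) :=
        mul_le_mul_of_nonneg_right h' (by linarith)
      exfalso; nlinarith
  · have heq : dy = dx*(2*(u:ℤ)+3) + (2*(u:ℤ)*u+6*u+5) := by linarith
    have hd1 : dx ≤ -(u:ℤ)-1 := by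
      by_contra h
      push_neg at h
      have h' : -(u:ℤ) ≤ dx := by omega
      have : (-(u:ℤ))*(2*u+3) ≤ dx*(2*(u:ℤ)+3) :=
        mul_le_mul_of_nonneg_right h' (by linarith)
      nlinarith
    have hd2 : -(u:ℤ)-2 ≤ dx := by
      by_contra h
      push_neg at h
      have h' : dx ≤ -(u:ℤ)-3 := by omega
      have : dx*(2*(u:ℤ)+3) ≤ (-(u:ℤ)-3)*(2*u+3) :=
        mul_le_mul_of_nonneg_right h' (by linarith)
      nlinarith
    have : dx = -(u:ℤ)-1 ∨ dx = -(u:ℤ)-2 := by omega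
    rcases this with rfl | rfl
    · right; left; exact ⟨rfl, by nlinarith [heq]⟩
    · right; right; right; exact ⟨rfl, by nlinarith [heq]⟩

lemma pair_dvd (u n : ℕ) (hn : n = 2*u^2+6*u+4) (σ : Equiv.Perm (Fin n))
    (hσ : ∀ i : Fin n, (σ i : ℕ) + 1 = (((i:ℕ)+1)*(2*u+3)) % (n+1)) (z w : Fin n) :
    (2*(u:ℤ)*u+6*u+5) ∣ (((σ w : ℕ):ℤ) - ((σ z : ℕ):ℤ) - (((w:ℕ):ℤ) - ((z:ℕ):ℤ))*(2*u+3)) := by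
  have key : ∀ y : Fin n, ((n:ℤ)+1) ∣ (((y:ℕ):ℤ)+1)*(2*u+3) - (((σ y : ℕ):ℤ)+1) := by
    intro y
    have h1 := hσ y
    have h2 : ((σ y : ℕ):ℤ) + 1 = ((((y:ℕ):ℤ)+1)*(2*(u:ℤ)+3)) % ((n:ℤ)+1) := by
      exact_mod_cast congrArg (Nat.cast : ℕ → ℤ) h1
    rw [Int.emod_def] at h2
    exact ⟨(((y:ℕ):ℤ)+1)*(2*(u:ℤ)+3) / ((n:ℤ)+1), by linarith⟩
  have hzz := key z
  have hww := key w
  have hn' : ((n:ℤ)+1) = 2*(u:ℤ)*u+6*u+5 := by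
    have : (n:ℤ) = 2*(u:ℤ)^2+6*u+4 := by exact_mod_cast congrArg (Nat.cast : ℕ → ℤ) hn
    rw [this]; ring
  rw [hn'] at hzz hww
  have hsub := dvd_sub hzz hww
  have h3 : ((((z:ℕ):ℤ)+1)*(2*u+3) - (((σ z : ℕ):ℤ)+1)) -
      ((((w:ℕ):ℤ)+1)*(2*u+3) - (((σ w : ℕ):ℤ)+1))
      = (((σ w : ℕ):ℤ) - ((σ z : ℕ):ℤ) - (((w:ℕ):ℤ) - ((z:ℕ):ℤ))*(2*u+3)) := by ring
  rwa [h3] at hsub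

lemma part1 (u n : ℕ) (hn : n = 2*u^2+6*u+4) (σ : Equiv.Perm (Fin n))
    (hσ : ∀ i : Fin n, (σ i : ℕ) + 1 = (((i:ℕ)+1)*(2*u+3)) % (n+1)) :
    ∀ i j : Fin n, i ≠ j → 2*u+3 ≤ dperm σ i j := by
  intro i j hij
  by_contra h
  push_neg at h
  have hd1 : 1 ≤ Nat.dist (i:ℕ) (j:ℕ) := by
    have h0 : (i:ℕ) ≠ (j:ℕ) := fun hh => hij (Fin.ext hh)
    have := Nat.dist_pos_of_ne h0
    omega
  have he1 : 1 ≤ Nat.dist (σ i : ℕ) (σ j : ℕ) := by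
    have h0 : (σ i : ℕ) ≠ (σ j : ℕ) := fun hh => hij (σ.injective (Fin.ext hh))
    have := Nat.dist_pos_of_ne h0
    omega
  have hsum : Nat.dist (i:ℕ) (j:ℕ) + Nat.dist (σ i : ℕ) (σ j : ℕ) ≤ 2*u+2 := by
    unfold dperm at h; omega
  set dx : ℤ := ((j:ℕ):ℤ) - ((i:ℕ):ℤ) with hdx
  set dy : ℤ := ((σ j : ℕ):ℤ) - ((σ i : ℕ):ℤ) with hdy
  have hdxa : dx.natAbs = Nat.dist (i:ℕ) (j:ℕ) := by
    rw [nat_dist_natAbs]; omega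
  have hdya : dy.natAbs = Nat.dist (σ i : ℕ) (σ j : ℕ) := by
    rw [nat_dist_natAbs]; omega
  have h4 := rigid u dx dy (by omega) (by omega) (by omega)
    (pair_dvd u n hn σ hσ i j)
  rcases h4 with ⟨h5, h6⟩ | ⟨h5, h6⟩ | ⟨h5, h6⟩ | ⟨h5, h6⟩ <;> omega

lemma sm_lb_aux {N M : ℕ} {f : Fin N → Fin M} (hf : StrictMono f) :
    ∀ (n : ℕ) (hn : n < N), n ≤ (f ⟨n, hn⟩ : ℕ) := by
  intro n
  induction n with
  | zero => intro hn; exact Nat.zero_le _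
  | succ n ih =>
    intro hn
    have hn' : n < N := by omega
    have h1 : (⟨n, hn'⟩ : Fin N) < ⟨n+1, hn⟩ := by
      rw [Fin.lt_def]; exact Nat.lt_succ_self n
    have h2 : (f ⟨n, hn'⟩ : ℕ) < (f ⟨n+1, hn⟩ : ℕ) := hf h1
    have h3 := ih hn'
    omega

lemma sm_lb {N M : ℕ} {f : Fin N → Fin M} (hf : StrictMono f) (t : Fin N) :
    (t : ℕ) ≤ (f t : ℕ) := by
  have := sm_lb_aux hf t.1 t.2
  simpa using this

lemma sm_ub {N M : ℕ} {f : Fin N → Fin M} (hf : StrictMono f) (t : Fin N) :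
    (f t : ℕ) ≤ (t : ℕ) + (M - N) := by
  have hrev : StrictMono (fun s : Fin N => (f s.rev).rev) := by
    intro a b hab
    have h2 : b.rev < a.rev := by
      rw [Fin.lt_def, Fin.val_rev, Fin.val_rev]
      rw [Fin.lt_def] at hab
      have := a.isLt; have := b.isLt
      omega
    have h3 : f b.rev < f a.rev := hf h2
    rw [Fin.lt_def] at h3 ⊢
    rw [Fin.val_rev, Fin.val_rev]
    have := (f b.rev).isLt; have := (f a.rev).isLt
    omega
  have h4 := sm_lb hrev t.rev
  simp only [Fin.val_rev, Fin.rev_rev] at h4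
  have h5 := (f t).isLt
  have ht := t.isLt
  omega

lemma avoid_card {N M k : ℕ} (hM : M = N + k) (f : Fin N → Fin M) (hf : Function.Injective f)
    (F : Finset (Fin M)) (hF : ∀ z ∈ F, ∀ t, f t ≠ z) : F.card ≤ k := by
  classical
  have hsub : F ⊆ (Finset.univ.image f)ᶜ := by
    intro z hz
    simp only [Finset.mem_compl, Finset.mem_image, not_exists]
    intro t hh
    exact hF z hz t hh.2
  have h1 := Finset.card_le_card hsub
  rw [Finset.card_compl, Finset.card_image_of_injective _ hf] at h1
  simp only [Fintype.card_fin, Finset.card_univ] at h1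
  omega

lemma signConst {N M k h : ℕ} (hM : M = N + k) (h2h : k + 1 ≤ 2*h)
    (C D : Fin N → Fin M) (hC : StrictMono C) (hD : StrictMono D)
    (hdist : ∀ t, C t ≠ D t → h ≤ Nat.dist (C t : ℕ) (D t : ℕ))
    (t t' : Fin N) (htt' : t < t') (hlt1 : C t < D t) (hlt2 : D t' < C t') : False := by
  classical
  set T : Finset (Fin N) := (Finset.Icc t t').filter (fun τ => C τ < D τ) with hT
  have hTne : t ∈ T := by
    simp [hT, Finset.mem_filter, Finset.mem_Icc, le_of_lt htt', hlt1]
  set t₁ := T.max' ⟨t, hTne⟩ with ht₁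
  have ht₁T : t₁ ∈ T := T.max'_mem _
  have ht₁icc : t ≤ t₁ ∧ t₁ ≤ t' := by
    have := (Finset.mem_filter.mp ht₁T).1
    exact Finset.mem_Icc.mp this
  have hCDt₁ : C t₁ < D t₁ := (Finset.mem_filter.mp ht₁T).2
  have ht₁t' : t₁ < t' := by
    rcases lt_or_eq_of_le ht₁icc.2 with hh | hh
    · exact hh
    · exfalso; rw [hh] at hCDt₁; exact absurd hCDt₁ (not_lt.mpr (le_of_lt hlt2))
  have hτ₁lt : (t₁ : ℕ) + 1 < N := by
    have h1 : (t₁:ℕ) < (t':ℕ) := ht₁t'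
    have := t'.isLt
    omega
  set τ₁ : Fin N := ⟨(t₁:ℕ)+1, hτ₁lt⟩ with hτ₁def
  have ht₁τ₁ : t₁ < τ₁ := by rw [Fin.lt_def]; simp [hτ₁def]
  have hτ₁t' : τ₁ ≤ t' := by
    rw [Fin.le_def]; simp only [hτ₁def]
    have h1 : (t₁:ℕ) < (t':ℕ) := ht₁t'
    omega
  have hτ₁notlt : ¬ (C τ₁ < D τ₁) := by
    intro hcon
    have : τ₁ ∈ T := by
      simp only [hT, Finset.mem_filter, Finset.mem_Icc]
      exact ⟨⟨le_trans ht₁icc.1 (le_of_lt ht₁τ₁), hτ₁t'⟩, hcon⟩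
    have := Finset.le_max' T τ₁ this
    rw [← ht₁] at this
    exact absurd ht₁τ₁ (not_lt.mpr this)
  have hd1 : (C t₁ : ℕ) + h ≤ (D t₁ : ℕ) := by
    have h5 := hdist t₁ (ne_of_lt hCDt₁)
    have hlt : (C t₁ : ℕ) < (D t₁ : ℕ) := hCDt₁
    rw [nat_dist_natAbs] at h5
    omega
  by_cases hflip : D τ₁ < C τ₁
  · have hd2 : (D τ₁ : ℕ) + h ≤ (C τ₁ : ℕ) := by
      have h5 := hdist τ₁ (fun e => absurd e.symm (ne_of_lt hflip))
      have hlt : (D τ₁ : ℕ) < (C τ₁ : ℕ) := hflip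
      rw [nat_dist_natAbs] at h5
      omega
    have hDmono : (D t₁ : ℕ) < (D τ₁ : ℕ) := hD ht₁τ₁
    set F := (Finset.Ico ((C t₁:ℕ)+1) (C τ₁:ℕ)).attachFin (n := M)
      (fun z hz => lt_trans (Finset.mem_Ico.mp hz).2 (C τ₁).isLt) with hF
    have hcard : F.card = (C τ₁:ℕ) - (C t₁:ℕ) - 1 := by
      rw [hF, Finset.card_attachFin, Nat.card_Ico]; omega
    have havoid : ∀ z ∈ F, ∀ j, C j ≠ z := by
      intro z hz j hCj
      rw [hF, Finset.mem_attachFin] at hz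
      rw [Finset.mem_Ico] at hz
      rcases le_or_gt j t₁ with hj | hj
      · have : (C j : ℕ) ≤ (C t₁ : ℕ) := hC.monotone hj
        rw [hCj] at this; omega
      · have hj' : τ₁ ≤ j := by rw [Fin.le_def]; exact hj
        have : (C τ₁ : ℕ) ≤ (C j : ℕ) := hC.monotone hj'
        rw [hCj] at this; omega
    have := avoid_card hM C hC.injective F havoid
    omega
  · have heq1 : C τ₁ = D τ₁ := le_antisymm (not_lt.mp hflip) (not_lt.mp hτ₁notlt)
    set T₂ : Finset (Fin N) := (Finset.Icc τ₁ t').filter (fun τ => D τ < C τ) with hT₂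
    have hT₂ne : t' ∈ T₂ := by
      simp [hT₂, Finset.mem_filter, Finset.mem_Icc, hτ₁t', hlt2]
    set t₂ := T₂.min' ⟨t', hT₂ne⟩ with ht₂
    have ht₂T : t₂ ∈ T₂ := T₂.min'_mem _
    have ht₂icc : τ₁ ≤ t₂ ∧ t₂ ≤ t' := by
      have := (Finset.mem_filter.mp ht₂T).1
      exact Finset.mem_Icc.mp this
    have hDCt₂ : D t₂ < C t₂ := (Finset.mem_filter.mp ht₂T).2
    have hτ₁t₂ : τ₁ < t₂ := by
      rcases lt_or_eq_of_le ht₂icc.1 with hh | hh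
      · exact hh
      · exfalso; rw [← hh] at hDCt₂; rw [heq1] at hDCt₂; exact lt_irrefl _ hDCt₂
    have hτ₂lt : (t₂ : ℕ) - 1 < N := by have := t₂.isLt; omega
    set τ₂ : Fin N := ⟨(t₂:ℕ)-1, hτ₂lt⟩ with hτ₂def
    have hτ₁τ₂ : τ₁ ≤ τ₂ := by
      rw [Fin.le_def]; simp only [hτ₂def]
      have h1 : (τ₁:ℕ) < (t₂:ℕ) := hτ₁t₂
      omega
    have hτ₂t₂ : τ₂ < t₂ := by
      rw [Fin.lt_def]; simp only [hτ₂def]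
      have h1 : (τ₁:ℕ) < (t₂:ℕ) := hτ₁t₂
      have h2 : (τ₁:ℕ) = (t₁:ℕ)+1 := rfl
      omega
    have heq2 : C τ₂ = D τ₂ := by
      have hn1 : ¬ (D τ₂ < C τ₂) := by
        intro hcon
        have : τ₂ ∈ T₂ := by
          simp only [hT₂, Finset.mem_filter, Finset.mem_Icc]
          exact ⟨⟨hτ₁τ₂, le_trans (le_of_lt hτ₂t₂) ht₂icc.2⟩, hcon⟩
        have := Finset.min'_le T₂ τ₂ this
        rw [← ht₂] at this
        exact absurd hτ₂t₂ (not_lt.mpr this)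
      have hn2 : ¬ (C τ₂ < D τ₂) := by
        intro hcon
        have : τ₂ ∈ T := by
          simp only [hT, Finset.mem_filter, Finset.mem_Icc]
          refine ⟨⟨?_, le_trans (le_of_lt hτ₂t₂) ht₂icc.2⟩, hcon⟩
          exact le_trans ht₁icc.1 (le_trans (le_of_lt ht₁τ₁) hτ₁τ₂)
        have h6 := Finset.le_max' T τ₂ this
        rw [← ht₁] at h6
        have h7 : (τ₂:ℕ) ≤ (t₁:ℕ) := h6
        have h8 : (t₁:ℕ) < (τ₁:ℕ) := ht₁τ₁
        have h9 : (τ₁:ℕ) ≤ (τ₂:ℕ) := hτ₁τ₂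
        omega
      exact le_antisymm (not_lt.mp hn1) (not_lt.mp hn2)
    have hd2 : (D t₂ : ℕ) + h ≤ (C t₂ : ℕ) := by
      have h5 := hdist t₂ (fun e => absurd e.symm (ne_of_lt hDCt₂))
      have hlt : (D t₂ : ℕ) < (C t₂ : ℕ) := hDCt₂
      rw [nat_dist_natAbs] at h5
      omega
    have hkey : (D t₁ : ℕ) < (D t₂ : ℕ) := by
      have e1 : (D t₁ : ℕ) < (D τ₁ : ℕ) := hD ht₁τ₁
      have e2 : (C τ₁ : ℕ) ≤ (C τ₂ : ℕ) := hC.monotone hτ₁τ₂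
      have e3 : (D τ₂ : ℕ) < (D t₂ : ℕ) := hD hτ₂t₂
      have e4 : (C τ₁ : ℕ) = (D τ₁ : ℕ) := congrArg _ heq1
      have e5 : (C τ₂ : ℕ) = (D τ₂ : ℕ) := congrArg _ heq2
      omega
    set F₁ := (Finset.Ico ((C t₁:ℕ)+1) ((D t₁:ℕ)+1)).attachFin (n := M)
      (fun z hz => lt_of_lt_of_le (Finset.mem_Ico.mp hz).2 ((D t₁).isLt)) with hF₁
    set F₂ := (Finset.Ico (D t₂:ℕ) (C t₂:ℕ)).attachFin (n := M)
      (fun z hz => lt_trans (Finset.mem_Ico.mp hz).2 (C t₂).isLt) with hF₂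
    have hcard₁ : F₁.card = (D t₁:ℕ) - (C t₁:ℕ) := by
      rw [hF₁, Finset.card_attachFin, Nat.card_Ico]; omega
    have hcard₂ : F₂.card = (C t₂:ℕ) - (D t₂:ℕ) := by
      rw [hF₂, Finset.card_attachFin, Nat.card_Ico]
    have havoid : ∀ z ∈ F₁ ∪ F₂, ∀ j, C j ≠ z := by
      intro z hz j hCj
      rw [Finset.mem_union] at hz
      rcases hz with hz | hz
      · rw [hF₁, Finset.mem_attachFin, Finset.mem_Ico] at hz
        rcases le_or_gt j t₁ with hj | hj
        · have : (C j : ℕ) ≤ (C t₁ : ℕ) := hC.monotone hj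
          rw [hCj] at this; omega
        · have hj' : τ₁ ≤ j := by rw [Fin.le_def]; exact hj
          have e1 : (C τ₁ : ℕ) ≤ (C j : ℕ) := hC.monotone hj'
          have e2 : (C τ₁ : ℕ) = (D τ₁ : ℕ) := congrArg _ heq1
          have e3 : (D t₁ : ℕ) < (D τ₁ : ℕ) := hD ht₁τ₁
          rw [hCj] at e1; omega
      · rw [hF₂, Finset.mem_attachFin, Finset.mem_Ico] at hz
        rcases le_or_gt t₂ j with hj | hj
        · have : (C t₂ : ℕ) ≤ (C j : ℕ) := hC.monotone hj
          rw [hCj] at this; omega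
        · have hj' : j ≤ τ₂ := by
            rw [Fin.le_def]
            have e0 : (j:ℕ) < (t₂:ℕ) := hj
            simp only [hτ₂def]
            omega
          have e1 : (C j : ℕ) ≤ (C τ₂ : ℕ) := hC.monotone hj'
          have e2 : (C τ₂ : ℕ) = (D τ₂ : ℕ) := congrArg _ heq2
          have e3 : (D τ₂ : ℕ) < (D t₂ : ℕ) := hD hτ₂t₂
          rw [hCj] at e1; omega
    have hdisj : Disjoint F₁ F₂ := by
      rw [Finset.disjoint_left]
      intro z hz1 hz2
      rw [hF₁, Finset.mem_attachFin, Finset.mem_Ico] at hz1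
      rw [hF₂, Finset.mem_attachFin, Finset.mem_Ico] at hz2
      omega
    have hcardU : (F₁ ∪ F₂).card = F₁.card + F₂.card := Finset.card_union_of_disjoint hdisj
    have := avoid_card hM C hC.injective (F₁ ∪ F₂) havoid
    omega

lemma mainContr {M N k u : ℕ} (hk : k = 2*u+1) (hM : M = N + k)
    (σ : Equiv.Perm (Fin M))
    (hbr : ∀ i j : Fin M, i ≠ j → k+2 ≤ Nat.dist (i:ℕ) (j:ℕ) + Nat.dist (σ i:ℕ) (σ j:ℕ))
    (hrig : ∀ z w : Fin M, z ≠ w → Nat.dist (z:ℕ) (w:ℕ) ≤ k → Nat.dist (σ z:ℕ) (σ w:ℕ) ≤ k →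
      (((w:ℕ):ℤ) - ((z:ℕ):ℤ) = u+1 ∧ ((σ w:ℕ):ℤ) - ((σ z:ℕ):ℤ) = -(u:ℤ)-2) ∨
      (((w:ℕ):ℤ) - ((z:ℕ):ℤ) = -(u:ℤ)-1 ∧ ((σ w:ℕ):ℤ) - ((σ z:ℕ):ℤ) = (u:ℤ)+2) ∨
      (((w:ℕ):ℤ) - ((z:ℕ):ℤ) = (u:ℤ)+2 ∧ ((σ w:ℕ):ℤ) - ((σ z:ℕ):ℤ) = (u:ℤ)+1) ∨
      (((w:ℕ):ℤ) - ((z:ℕ):ℤ) = -(u:ℤ)-2 ∧ ((σ w:ℕ):ℤ) - ((σ z:ℕ):ℤ) = -(u:ℤ)-1))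
    (C D U V : Fin N → Fin M)
    (hC : StrictMono C) (hD : StrictMono D) (hU : StrictMono U) (hV : StrictMono V)
    (ρ : Fin N → Fin N) (hρ : Function.Surjective ρ)
    (hCU : ∀ t, σ (C t) = U (ρ t)) (hDV : ∀ t, σ (D t) = V (ρ t))
    (hne : ∃ t, C t ≠ D t)
    (horient : ∀ t, C t ≠ D t → C t < D t) : False := by
  classical
  -- basic distance bounds for matched pairs
  have hbdpos : ∀ t : Fin N, Nat.dist (C t : ℕ) (D t : ℕ) ≤ k := by
    intro t
    have h1 := sm_lb hC t; have h2 := sm_ub hC t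
    have h3 := sm_lb hD t; have h4 := sm_ub hD t
    have h5 : M - N = k := by omega
    rw [h5] at h2 h4
    rw [nat_dist_natAbs]
    omega
  have hbdval : ∀ t : Fin N, Nat.dist (σ (C t) : ℕ) (σ (D t) : ℕ) ≤ k := by
    intro t
    rw [hCU, hDV]
    have h1 := sm_lb hU (ρ t); have h2 := sm_ub hU (ρ t)
    have h3 := sm_lb hV (ρ t); have h4 := sm_ub hV (ρ t)
    have h5 : M - N = k := by omega
    rw [h5] at h2 h4
    rw [nat_dist_natAbs]
    omega
  have hpair := fun (t : Fin N) (ht : C t ≠ D t) =>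
    hrig (C t) (D t) ht (hbdpos t) (hbdval t)
  have hUVne : ∀ t : Fin N, C t ≠ D t → U (ρ t) ≠ V (ρ t) := by
    intro t ht
    rw [← hCU, ← hDV]
    exact fun e => ht (σ.injective e)
  -- value pair facts for arbitrary rank in R
  have hpairR : ∀ r : Fin N, U r ≠ V r → ∃ t : Fin N, ρ t = r ∧ C t ≠ D t := by
    intro r hr
    obtain ⟨t, rfl⟩ := hρ r
    refine ⟨t, rfl, ?_⟩
    intro e
    exact hr (by rw [← hCU, ← hDV, e])
  have hdistC : ∀ t, C t ≠ D t → u+1 ≤ Nat.dist (C t : ℕ) (D t : ℕ) := by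
    intro t ht
    have := hpair t ht
    rw [nat_dist_natAbs]
    rcases this with ⟨h1, h2⟩ | ⟨h1, h2⟩ | ⟨h1, h2⟩ | ⟨h1, h2⟩ <;> omega
  have hdistUV : ∀ r, U r ≠ V r → u+1 ≤ Nat.dist (U r : ℕ) (V r : ℕ) := by
    intro r hr
    obtain ⟨t, rfl, ht⟩ := hpairR r hr
    have := hpair t ht
    rw [nat_dist_natAbs]
    rw [← hCU, ← hDV]
    rcases this with ⟨h1, h2⟩ | ⟨h1, h2⟩ | ⟨h1, h2⟩ | ⟨h1, h2⟩ <;> omega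
  have h2h : k + 1 ≤ 2*(u+1) := by omega
  -- value sign constancy
  have hvalsign : (∀ t, C t ≠ D t → (U (ρ t) : ℕ) < (V (ρ t) : ℕ)) ∨
      (∀ t, C t ≠ D t → (V (ρ t) : ℕ) < (U (ρ t) : ℕ)) := by
    by_cases hex : ∃ s, C s ≠ D s ∧ (V (ρ s) : ℕ) < (U (ρ s) : ℕ)
    · right
      intro t ht
      by_contra hcon
      push_neg at hcon
      have hUV := hUVne t ht
      have hlt : (U (ρ t) : ℕ) < (V (ρ t) : ℕ) := by
        rcases lt_or_eq_of_le hcon with hh | hh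
        · exact hh
        · exact absurd (Fin.ext hh) hUV
      obtain ⟨s, hs, hVU⟩ := hex
      have hUltV : U (ρ t) < V (ρ t) := hlt
      have hVltU : V (ρ s) < U (ρ s) := hVU
      rcases lt_trichotomy (ρ t) (ρ s) with hh | hh | hh
      · exact signConst hM h2h U V hU hV hdistUV (ρ t) (ρ s) hh hUltV hVltU
      · rw [hh] at hUltV; exact absurd hVltU (not_lt.mpr (le_of_lt hUltV))
      · refine signConst hM h2h V U hV hU ?_ (ρ s) (ρ t) hh hVltU hUltV
        intro r hr
        rw [Nat.dist_comm]
        exact hdistUV r (Ne.symm hr)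
    · left
      intro t ht
      push_neg at hex
      have h1 := hex t ht
      have hUV := hUVne t ht
      rcases lt_or_eq_of_le h1 with hh | hh
      · exact hh
      · exact absurd (Fin.ext hh.symm : V (ρ t) = U (ρ t)).symm (hUVne t ht)
  -- position chunk at min S
  set S : Finset (Fin N) := Finset.univ.filter (fun t => C t ≠ D t) with hS
  have hSne : S.Nonempty := by
    obtain ⟨t, ht⟩ := hne
    exact ⟨t, by simp [hS, ht]⟩
  set t₀ := S.min' hSne with ht₀
  have ht₀S : t₀ ∈ S := S.min'_mem _
  have ht₀ne : C t₀ ≠ D t₀ := by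
    have := (Finset.mem_filter.mp ht₀S).2; exact this
  have hCD₀ : C t₀ < D t₀ := horient t₀ ht₀ne
  have hminprop : ∀ j : Fin N, j < t₀ → C j = D j := by
    intro j hj
    by_contra hcon
    have : j ∈ S := by simp [hS, hcon]
    have := S.min'_le j this
    rw [← ht₀] at this
    exact absurd hj (not_lt.mpr this)
  have hPavoid : ∀ z : Fin M, (C t₀ : ℕ) ≤ (z:ℕ) → (z:ℕ) < (D t₀ : ℕ) → ∀ j, D j ≠ z := by
    intro z hz1 hz2 j hDj
    rcases lt_or_ge j t₀ with hj | hj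
    · have e1 : C j = D j := hminprop j hj
      have e2 : (C j : ℕ) < (C t₀ : ℕ) := hC hj
      rw [e1, hDj] at e2
      omega
    · have : (D t₀ : ℕ) ≤ (D j : ℕ) := hD.monotone hj
      rw [hDj] at this
      omega
  -- the value rank set R
  set R : Finset (Fin N) := Finset.univ.filter (fun r => U r ≠ V r) with hR
  have hRne : R.Nonempty := ⟨ρ t₀, by simp [hR, hUVne t₀ ht₀ne]⟩
  rcases hvalsign with hsign | hsign
  · -- all dy > 0 : type v₂, dx = u+2, dy = u+1 everywhere
    set r₀ := R.min' hRne with hr₀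
    have hr₀R : r₀ ∈ R := R.min'_mem _
    have hr₀ne : U r₀ ≠ V r₀ := (Finset.mem_filter.mp hr₀R).2
    obtain ⟨t₁, hρt₁, ht₁ne⟩ := hpairR r₀ hr₀ne
    have hr₀lt : (U r₀ : ℕ) < (V r₀ : ℕ) := by rw [← hρt₁]; exact hsign t₁ ht₁ne
    have hrminprop : ∀ j : Fin N, j < r₀ → U j = V j := by
      intro j hj
      by_contra hcon
      have : j ∈ R := by simp [hR, hcon]
      have := R.min'_le j this
      rw [← hr₀] at this
      exact absurd hj (not_lt.mpr this)
    -- sizes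
    have hX : (D t₀ : ℕ) = (C t₀ : ℕ) + (u+2) := by
      have hp := hpair t₀ ht₀ne
      have hv := hsign t₀ ht₀ne
      have hposlt : (C t₀ : ℕ) < (D t₀ : ℕ) := hCD₀
      rw [hCU, hDV] at hp
      rcases hp with ⟨h1, h2⟩ | ⟨h1, h2⟩ | ⟨h1, h2⟩ | ⟨h1, h2⟩ <;> omega
    have hY : (V r₀ : ℕ) = (U r₀ : ℕ) + (u+1) := by
      have hp := hpair t₁ ht₁ne
      have hv : (U (ρ t₁) : ℕ) < (V (ρ t₁) : ℕ) := hsign t₁ ht₁ne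
      have hposlt : (C t₁ : ℕ) < (D t₁ : ℕ) := horient t₁ ht₁ne
      rw [hCU, hDV] at hp
      rw [← hρt₁]
      rcases hp with ⟨h1, h2⟩ | ⟨h1, h2⟩ | ⟨h1, h2⟩ | ⟨h1, h2⟩ <;> omega
    -- chunks
    set P := (Finset.Ico (C t₀ : ℕ) (D t₀ : ℕ)).attachFin (n := M)
      (fun z hz => lt_trans (Finset.mem_Ico.mp hz).2 (D t₀).isLt) with hP
    set Q := ((Finset.Ico (U r₀ : ℕ) (V r₀ : ℕ)).attachFin (n := M)
      (fun z hz => lt_trans (Finset.mem_Ico.mp hz).2 (V r₀).isLt)).image σ.symm with hQ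
    have hPcard : P.card = u+2 := by
      rw [hP, Finset.card_attachFin, Nat.card_Ico]; omega
    have hQcard : Q.card = u+1 := by
      rw [hQ, Finset.card_image_of_injective _ σ.symm.injective,
        Finset.card_attachFin, Nat.card_Ico]; omega
    have hQval : ∀ z ∈ Q, (U r₀ : ℕ) ≤ (σ z : ℕ) ∧ (σ z : ℕ) < (V r₀ : ℕ) := by
      intro z hz
      rw [hQ, Finset.mem_image] at hz
      obtain ⟨w, hw, rfl⟩ := hz
      rw [Finset.mem_attachFin, Finset.mem_Ico] at hw
      rw [Equiv.apply_symm_apply]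
      exact hw
    have hQavoid : ∀ z ∈ Q, ∀ j, D j ≠ z := by
      intro z hz j hDj
      have hv := hQval z hz
      have e1 : σ z = V (ρ j) := by rw [← hDj, hDV]
      have e2 : (V (ρ j) : ℕ) < (V r₀ : ℕ) := by rw [← e1]; exact hv.2
      have e3 : ρ j < r₀ := by
        by_contra hcon
        push_neg at hcon
        exact absurd e2 (not_lt.mpr (hV.monotone hcon))
      have e4 : U (ρ j) = V (ρ j) := hrminprop _ e3
      have e5 : (U (ρ j) : ℕ) < (U r₀ : ℕ) := hU e3
      rw [e4, ← e1] at e5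
      omega
    have hPavoid' : ∀ z ∈ P, ∀ j, D j ≠ z := by
      intro z hz j
      rw [hP, Finset.mem_attachFin, Finset.mem_Ico] at hz
      exact hPavoid z hz.1 hz.2 j
    have hinter : (P ∩ Q).card ≤ 1 := by
      rw [Finset.card_le_one]
      intro z1 hz1 z2 hz2
      by_contra hne12
      rw [Finset.mem_inter] at hz1 hz2
      have e1 := hbr z1 z2 hne12
      have p1 : (C t₀ : ℕ) ≤ (z1:ℕ) ∧ (z1:ℕ) < (D t₀ : ℕ) := by
        have := hz1.1; rw [hP, Finset.mem_attachFin, Finset.mem_Ico] at this; exact this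
      have p2 : (C t₀ : ℕ) ≤ (z2:ℕ) ∧ (z2:ℕ) < (D t₀ : ℕ) := by
        have := hz2.1; rw [hP, Finset.mem_attachFin, Finset.mem_Ico] at this; exact this
      have q1 := hQval z1 hz1.2
      have q2 := hQval z2 hz2.2
      rw [nat_dist_natAbs, nat_dist_natAbs] at e1
      omega
    have hunion : (P ∪ Q).card + (P ∩ Q).card = P.card + Q.card :=
      Finset.card_union_add_card_inter P Q
    have havoidU : ∀ z ∈ P ∪ Q, ∀ j, D j ≠ z := by
      intro z hz
      rw [Finset.mem_union] at hz
      rcases hz with hz | hz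
      · exact hPavoid' z hz
      · exact hQavoid z hz
    have hle := avoid_card hM D hD.injective (P ∪ Q) havoidU
    omega
  · -- all dy < 0 : type v₁, dx = u+1, dy = -(u+2)
    set r₁ := R.max' hRne with hr₁
    have hr₁R : r₁ ∈ R := R.max'_mem _
    have hr₁ne : U r₁ ≠ V r₁ := (Finset.mem_filter.mp hr₁R).2
    obtain ⟨t₁, hρt₁, ht₁ne⟩ := hpairR r₁ hr₁ne
    have hr₁lt : (V r₁ : ℕ) < (U r₁ : ℕ) := by rw [← hρt₁]; exact hsign t₁ ht₁ne
    have hrmaxprop : ∀ j : Fin N, r₁ < j → U j = V j := by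
      intro j hj
      by_contra hcon
      have : j ∈ R := by simp [hR, hcon]
      have := R.le_max' j this
      rw [← hr₁] at this
      exact absurd hj (not_lt.mpr this)
    have hX : (D t₀ : ℕ) = (C t₀ : ℕ) + (u+1) := by
      have hp := hpair t₀ ht₀ne
      have hv : (V (ρ t₀) : ℕ) < (U (ρ t₀) : ℕ) := hsign t₀ ht₀ne
      have hposlt : (C t₀ : ℕ) < (D t₀ : ℕ) := hCD₀
      rw [hCU, hDV] at hp
      rcases hp with ⟨h1, h2⟩ | ⟨h1, h2⟩ | ⟨h1, h2⟩ | ⟨h1, h2⟩ <;> omega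
    have hY : (U r₁ : ℕ) = (V r₁ : ℕ) + (u+2) := by
      have hp := hpair t₁ ht₁ne
      have hv : (V (ρ t₁) : ℕ) < (U (ρ t₁) : ℕ) := hsign t₁ ht₁ne
      have hposlt : (C t₁ : ℕ) < (D t₁ : ℕ) := horient t₁ ht₁ne
      rw [hCU, hDV] at hp
      rw [← hρt₁]
      rcases hp with ⟨h1, h2⟩ | ⟨h1, h2⟩ | ⟨h1, h2⟩ | ⟨h1, h2⟩ <;> omega
    set P := (Finset.Ico (C t₀ : ℕ) (D t₀ : ℕ)).attachFin (n := M)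
      (fun z hz => lt_trans (Finset.mem_Ico.mp hz).2 (D t₀).isLt) with hP
    set Q := ((Finset.Ico ((V r₁ : ℕ)+1) ((U r₁ : ℕ)+1)).attachFin (n := M)
      (fun z hz => lt_of_lt_of_le (Finset.mem_Ico.mp hz).2 ((U r₁).isLt))).image σ.symm with hQ
    have hPcard : P.card = u+1 := by
      rw [hP, Finset.card_attachFin, Nat.card_Ico]; omega
    have hQcard : Q.card = u+2 := by
      rw [hQ, Finset.card_image_of_injective _ σ.symm.injective,
        Finset.card_attachFin, Nat.card_Ico]; omega
    have hQval : ∀ z ∈ Q, (V r₁ : ℕ) < (σ z : ℕ) ∧ (σ z : ℕ) ≤ (U r₁ : ℕ) := by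
      intro z hz
      rw [hQ, Finset.mem_image] at hz
      obtain ⟨w, hw, rfl⟩ := hz
      rw [Finset.mem_attachFin, Finset.mem_Ico] at hw
      rw [Equiv.apply_symm_apply]
      omega
    have hQVavoid : ∀ z ∈ Q, ∀ j, V j ≠ σ z := by
      intro z hz j hVj
      have hv := hQval z hz
      have e2 : (V r₁ : ℕ) < (V j : ℕ) := by rw [hVj]; exact hv.1
      have e3 : r₁ < j := by
        by_contra hcon
        push_neg at hcon
        exact absurd e2 (not_lt.mpr (hV.monotone hcon))
      have e4 : U j = V j := hrmaxprop _ e3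
      have e5 : (U r₁ : ℕ) < (U j : ℕ) := hU e3
      rw [e4, hVj] at e5
      omega
    have hQavoid : ∀ z ∈ Q, ∀ j, D j ≠ z := by
      intro z hz j hDj
      have e1 : σ z = V (ρ j) := by rw [← hDj, hDV]
      exact hQVavoid z hz (ρ j) e1.symm
    have hPavoid' : ∀ z ∈ P, ∀ j, D j ≠ z := by
      intro z hz j
      rw [hP, Finset.mem_attachFin, Finset.mem_Ico] at hz
      exact hPavoid z hz.1 hz.2 j
    have hinter : (P ∩ Q).card ≤ 1 := by
      rw [Finset.card_le_one]
      intro z1 hz1 z2 hz2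
      by_contra hne12
      rw [Finset.mem_inter] at hz1 hz2
      have e1 := hbr z1 z2 hne12
      have p1 : (C t₀ : ℕ) ≤ (z1:ℕ) ∧ (z1:ℕ) < (D t₀ : ℕ) := by
        have := hz1.1; rw [hP, Finset.mem_attachFin, Finset.mem_Ico] at this; exact this
      have p2 : (C t₀ : ℕ) ≤ (z2:ℕ) ∧ (z2:ℕ) < (D t₀ : ℕ) := by
        have := hz2.1; rw [hP, Finset.mem_attachFin, Finset.mem_Ico] at this; exact this
      have q1 := hQval z1 hz1.2
      have q2 := hQval z2 hz2.2
      rw [nat_dist_natAbs, nat_dist_natAbs] at e1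
      omega
    have hunion : (P ∪ Q).card + (P ∩ Q).card = P.card + Q.card :=
      Finset.card_union_add_card_inter P Q
    have havoidU : ∀ z ∈ P ∪ Q, ∀ j, D j ≠ z := by
      intro z hz
      rw [Finset.mem_union] at hz
      rcases hz with hz | hz
      · exact hPavoid' z hz
      · exact hQavoid z hz
    have hle := avoid_card hM D hD.injective (P ∪ Q) havoidU
    omega

lemma pattern_apply_s13 {n N : ℕ} (σ : Equiv.Perm (Fin n)) (A : Finset (Fin n)) (hcA : Aᶜ.card = N)
    (pA : (Aᶜ.image σ).card = N) :
    ∀ t, σ ((Aᶜ.orderIsoOfFin hcA t : Fin n))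
      = (((Aᶜ.image σ).orderIsoOfFin pA) ((pattern σ A hcA) t) : Fin n) := by
  intro t
  have h0 : ((Aᶜ.image σ).orderIsoOfFin pA).toEquiv ((pattern σ A hcA) t)
      = ⟨σ ((Aᶜ.orderIsoOfFin hcA t : Fin n)), by
          exact Finset.mem_image_of_mem σ ((Aᶜ.orderIsoOfFin hcA t).2)⟩ := by
    simp only [pattern, Equiv.trans_apply]
    rw [Equiv.apply_symm_apply]
    rw [Equiv.subtypeEquiv_apply]
    rfl
  have h1 := congrArg Subtype.val h0
  exact h1.symm

/-- For odd `k` and `m = (k² + 4k + 3)/2 = ⌈k²/2 + 2k + 1⌉`, the permutation `σ_k` of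
`{1, …, m}` given by `σ_k(i) = i(k+2) mod (m+1)` has breadth at least `k + 2`, and is
therefore a `k`-prolific permutation of size `⌈k²/2 + 2k + 1⌉`. -/
theorem sigma_odd_prolific (k : ℕ) (hk : 1 ≤ k) (hodd : Odd k)
    (σ : Equiv.Perm (Fin ((k ^ 2 + 4 * k + 3) / 2)))
    (hσ : ∀ i : Fin ((k ^ 2 + 4 * k + 3) / 2),
      (σ i : ℕ) + 1 = (((i : ℕ) + 1) * (k + 2)) % ((k ^ 2 + 4 * k + 3) / 2 + 1)) :
    (∀ i j : Fin ((k ^ 2 + 4 * k + 3) / 2), i ≠ j → k + 2 ≤ dperm σ i j) ∧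
    IsProlific k σ := by
  classical
  obtain ⟨u, hu⟩ := hodd
  subst hu
  have hMn : ((2*u+1) ^ 2 + 4 * (2*u+1) + 3) / 2 = 2*u^2+6*u+4 := by
    have e : (2*u+1) ^ 2 + 4 * (2*u+1) + 3 = 2*(2*u^2+6*u+4) := by ring
    omega
  have h23 : 2*u+1+2 = 2*u+3 := by omega
  have hσ2 : ∀ i : Fin (((2*u+1) ^ 2 + 4 * (2*u+1) + 3) / 2),
      (σ i : ℕ) + 1 = (((i:ℕ)+1)*(2*u+3)) % ((((2*u+1) ^ 2 + 4 * (2*u+1) + 3) / 2)+1) := by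
    intro i
    have h5 := hσ i
    rw [h23] at h5
    exact h5
  have hbr := part1 u _ hMn σ hσ2
  constructor
  · intro i j hij
    have := hbr i j hij
    omega
  · intro A B hAk hBk hAB hPE
    obtain ⟨N, hcA, hcB, hpq⟩ := hPE
    have hMN : (((2*u+1) ^ 2 + 4 * (2*u+1) + 3) / 2) = N + (2*u+1) := by
      have h1 := Finset.card_compl A
      rw [hcA, hAk] at h1
      have h2 := Finset.card_le_univ A
      rw [hAk] at h2
      simp only [Fintype.card_fin, Finset.card_univ] at h1 h2
      omega
    have pA : (Aᶜ.image σ).card = N := by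
      rw [Finset.card_image_of_injective _ σ.injective, hcA]
    have pB : (Bᶜ.image σ).card = N := by
      rw [Finset.card_image_of_injective _ σ.injective, hcB]
    set C : Fin N → Fin (((2*u+1) ^ 2 + 4 * (2*u+1) + 3) / 2) :=
      fun t => ((Aᶜ.orderIsoOfFin hcA) t : Fin _) with hCdef
    set D : Fin N → Fin (((2*u+1) ^ 2 + 4 * (2*u+1) + 3) / 2) :=
      fun t => ((Bᶜ.orderIsoOfFin hcB) t : Fin _) with hDdef
    set U : Fin N → Fin (((2*u+1) ^ 2 + 4 * (2*u+1) + 3) / 2) :=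
      fun r => (((Aᶜ.image σ).orderIsoOfFin pA) r : Fin _) with hUdef
    set V : Fin N → Fin (((2*u+1) ^ 2 + 4 * (2*u+1) + 3) / 2) :=
      fun r => (((Bᶜ.image σ).orderIsoOfFin pB) r : Fin _) with hVdef
    have hCsm : StrictMono C := fun a b hab =>
      Subtype.coe_lt_coe.mpr ((Aᶜ.orderIsoOfFin hcA).strictMono hab)
    have hDsm : StrictMono D := fun a b hab =>
      Subtype.coe_lt_coe.mpr ((Bᶜ.orderIsoOfFin hcB).strictMono hab)
    have hUsm : StrictMono U := fun a b hab =>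
      Subtype.coe_lt_coe.mpr (((Aᶜ.image σ).orderIsoOfFin pA).strictMono hab)
    have hVsm : StrictMono V := fun a b hab =>
      Subtype.coe_lt_coe.mpr (((Bᶜ.image σ).orderIsoOfFin pB).strictMono hab)
    set ρ : Fin N → Fin N := fun t => (pattern σ A hcA) t with hρdef
    have hρ : Function.Surjective ρ := (pattern σ A hcA).surjective
    have hCU : ∀ t, σ (C t) = U (ρ t) := fun t => pattern_apply_s13 σ A hcA pA t
    have hDV : ∀ t, σ (D t) = V (ρ t) := by
      intro t
      have h0 := pattern_apply_s13 σ B hcB pB t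
      rw [← hpq] at h0
      exact h0
    have hne : ∃ t, C t ≠ D t := by
      by_contra hcon
      push_neg at hcon
      apply hAB
      have hcompl : Aᶜ = Bᶜ := by
        apply Finset.eq_of_subset_of_card_le
        · intro z hz
          have e1 : C ((Aᶜ.orderIsoOfFin hcA).symm ⟨z, hz⟩) = z :=
            congrArg Subtype.val ((Aᶜ.orderIsoOfFin hcA).apply_symm_apply ⟨z, hz⟩)
          rw [← e1, hcon]
          exact ((Bᶜ.orderIsoOfFin hcB) _).2
        · rw [hcA, hcB]
      have := congrArg compl hcompl
      simpa using this
    have hrig : ∀ z w : Fin (((2*u+1) ^ 2 + 4 * (2*u+1) + 3) / 2), z ≠ w →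
        Nat.dist (z:ℕ) (w:ℕ) ≤ 2*u+1 → Nat.dist (σ z:ℕ) (σ w:ℕ) ≤ 2*u+1 →
        (((w:ℕ):ℤ) - ((z:ℕ):ℤ) = u+1 ∧ ((σ w:ℕ):ℤ) - ((σ z:ℕ):ℤ) = -(u:ℤ)-2) ∨
        (((w:ℕ):ℤ) - ((z:ℕ):ℤ) = -(u:ℤ)-1 ∧ ((σ w:ℕ):ℤ) - ((σ z:ℕ):ℤ) = (u:ℤ)+2) ∨
        (((w:ℕ):ℤ) - ((z:ℕ):ℤ) = (u:ℤ)+2 ∧ ((σ w:ℕ):ℤ) - ((σ z:ℕ):ℤ) = (u:ℤ)+1) ∨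
        (((w:ℕ):ℤ) - ((z:ℕ):ℤ) = -(u:ℤ)-2 ∧ ((σ w:ℕ):ℤ) - ((σ z:ℕ):ℤ) = -(u:ℤ)-1) := by
      intro z w hzw hd hv
      have hdvd := pair_dvd u _ hMn σ hσ2 z w
      apply rigid u _ _ ?_ ?_ ?_ hdvd
      · rw [nat_dist_natAbs] at hd; omega
      · rw [nat_dist_natAbs] at hv; omega
      · intro e
        apply hzw
        apply Fin.ext
        omega
    have hbr' : ∀ i j : Fin (((2*u+1) ^ 2 + 4 * (2*u+1) + 3) / 2), i ≠ j →
        (2*u+1)+2 ≤ Nat.dist (i:ℕ) (j:ℕ) + Nat.dist (σ i:ℕ) (σ j:ℕ) := by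
      intro i j hij
      have := hbr i j hij
      unfold dperm at this
      omega
    by_cases hex2 : ∃ s, D s < C s
    · by_cases hex1 : ∃ s, C s < D s
      · -- mixed position signs: contradiction via signConst
        obtain ⟨s, hs⟩ := hex1
        obtain ⟨s', hs'⟩ := hex2
        have hdistC : ∀ t, C t ≠ D t → u+1 ≤ Nat.dist (C t:ℕ) (D t:ℕ) := by
          intro t ht
          have h1 := sm_lb hCsm t; have h2 := sm_ub hCsm t
          have h3 := sm_lb hDsm t; have h4 := sm_ub hDsm t
          have v1 := sm_lb hUsm (ρ t); have v2 := sm_ub hUsm (ρ t)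
          have v3 := sm_lb hVsm (ρ t); have v4 := sm_ub hVsm (ρ t)
          have h5 : (((2*u+1) ^ 2 + 4 * (2*u+1) + 3) / 2) - N = 2*u+1 := by omega
          rw [h5] at h2 h4 v2 v4
          have hdp : Nat.dist (C t:ℕ) (D t:ℕ) ≤ 2*u+1 := by
            rw [nat_dist_natAbs]; omega
          have hdv : Nat.dist (σ (C t):ℕ) (σ (D t):ℕ) ≤ 2*u+1 := by
            rw [hCU, hDV, nat_dist_natAbs]; omega
          have h6 := hrig (C t) (D t) ht hdp hdv
          rw [nat_dist_natAbs]
          rcases h6 with ⟨e1, e2⟩ | ⟨e1, e2⟩ | ⟨e1, e2⟩ | ⟨e1, e2⟩ <;> omega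
        have h2h' : (2*u+1) + 1 ≤ 2*(u+1) := by omega
        rcases lt_trichotomy s s' with hss | hss | hss
        · exact (signConst hMN h2h' C D hCsm hDsm hdistC s s' hss hs hs').elim
        · rw [hss] at hs; exact absurd hs' (not_lt.mpr (le_of_lt hs))
        · refine (signConst hMN h2h' D C hDsm hCsm ?_ s' s hss hs' hs).elim
          intro t ht
          rw [Nat.dist_comm]
          exact hdistC t (Ne.symm ht)
      · -- all differing pairs have D < C : apply mainContr with roles swapped
        push_neg at hex1
        refine mainContr rfl hMN σ hbr' hrig D C V U hDsm hCsm hVsm hUsm ρ hρ hDV hCU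
          ?_ ?_
        · obtain ⟨t, ht⟩ := hne
          exact ⟨t, Ne.symm ht⟩
        · intro t ht
          exact lt_of_le_of_ne (hex1 t) ht
    · -- all differing pairs have C < D
      push_neg at hex2
      refine mainContr rfl hMN σ hbr' hrig C D U V hCsm hDsm hUsm hVsm ρ hρ hCU hDV
        hne ?_
      intro t ht
      exact lt_of_le_of_ne (hex2 t) ht

end Prolific
end
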